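/- arXiv:2006.09533 — 3 statements merged into one kernel-verified Lean document; each statement's English description precedes it below -/
import Mathlib

section
/- Among all probability distributions p on {0,1}^{|A|} satisfying the marginal constraints p(X = v) = q_D(X = v) for every clique X of a junction tree T and every binary vector v over X, the junction-tree distribution p(A = v; T) = Π_{X ∈ V(T)} q_D(X = v_X) / Π_{Y ∈ S(T)} q_D(Y = v_Y) uniquely maximizes entropy. -/
open scoped Classical

/-- A probability distribution on binary vectors over `Fin K`. -/
def IsDistribution {K : ℕ} (p : (Fin K → Bool) → ℝ) : Prop :=
  (∀ v, 0 ≤ p v) ∧ ∑ v, p v = 1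

/-- Marginal probability of the event "agrees with `v` on the itemset `X`". -/
noncomputable def margAt {K : ℕ} (p : (Fin K → Bool) → ℝ) (X : Finset (Fin K))
    (v : Fin K → Bool) : ℝ :=
  ∑ w : Fin K → Bool, if ∀ i ∈ X, w i = v i then p w else 0

/-- Frequency of an itemset: probability that all its attributes are 1. -/
noncomputable def pAll {K : ℕ} (p : (Fin K → Bool) → ℝ) (X : Finset (Fin K)) : ℝ :=
  margAt p X (fun _ => true)

/-- Empirical entropy of the marginal of `q` on the itemset `X`. -/
noncomputable def entX {K : ℕ} (q : (Fin K → Bool) → ℝ) (X : Finset (Fin K)) : ℝ :=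
  -∑ v : {i // i ∈ X} → Bool,
    (∑ w : Fin K → Bool, if ∀ i : {i // i ∈ X}, w i.1 = v i then q w else 0) *
      Real.log (∑ w : Fin K → Bool, if ∀ i : {i // i ∈ X}, w i.1 = v i then q w else 0)

/-- Entropy of a distribution on the full space. -/
noncomputable def entDist {K : ℕ} (p : (Fin K → Bool) → ℝ) : ℝ :=
  -∑ v : Fin K → Bool, p v * Real.log (p v)

def DownwardClosed {K : ℕ} (𝒢 : Finset (Finset (Fin K))) : Prop :=
  ∀ X ∈ 𝒢, ∀ Y ⊆ X, Y ∈ 𝒢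

def Covers {K : ℕ} (𝒢 : Finset (Finset (Fin K))) : Prop :=
  ∀ a : Fin K, ∃ X ∈ 𝒢, a ∈ X

/-- A junction tree (forest) over the family `𝒢`: an acyclic graph on the members of `𝒢`
whose edges join intersecting cliques, such that cliques sharing an attribute are connected,
and satisfying the running intersection property. -/
def IsJunctionTree {K : ℕ} (𝒢 : Finset (Finset (Fin K)))
    (G : SimpleGraph {C // C ∈ 𝒢}) : Prop :=
  G.IsAcyclic ∧
  (∀ X Y, G.Adj X Y → (X.1 ∩ Y.1).Nonempty) ∧
  (∀ (X Y : {C // C ∈ 𝒢}) (a : Fin K), a ∈ X.1 → a ∈ Y.1 → G.Reachable X Y) ∧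
  (∀ (X Y : {C // C ∈ 𝒢}) (a : Fin K), a ∈ X.1 → a ∈ Y.1 →
    ∀ w : G.Walk X Y, w.IsPath → ∀ Z ∈ w.support, a ∈ Z.1)

def Decomposable {K : ℕ} (𝒢 : Finset (Finset (Fin K))) : Prop :=
  ∃ G : SimpleGraph {C // C ∈ 𝒢}, IsJunctionTree 𝒢 G

noncomputable def sepEnt {K : ℕ} (q : (Fin K → Bool) → ℝ) {𝒢 : Finset (Finset (Fin K))}
    (e : Sym2 {C // C ∈ 𝒢}) : ℝ :=
  Sym2.lift ⟨fun X Y => entX q (X.1 ∩ Y.1), fun X Y => congrArg (entX q) (Finset.inter_comm _ _)⟩ e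

/-- Entropy of a junction tree: sum over cliques minus sum over separators. -/
noncomputable def treeEnt {K : ℕ} (q : (Fin K → Bool) → ℝ) (𝒢 : Finset (Finset (Fin K)))
    (G : SimpleGraph {C // C ∈ 𝒢}) : ℝ :=
  (∑ C : {C // C ∈ 𝒢}, entX q C.1) - ∑ e ∈ G.edgeFinset, sepEnt q e

/-- The junction tree distribution: product of clique marginals over product of
separator marginals. -/
noncomputable def jtDist {K : ℕ} (q : (Fin K → Bool) → ℝ) (𝒢 : Finset (Finset (Fin K)))
    (G : SimpleGraph {C // C ∈ 𝒢}) (v : Fin K → Bool) : ℝ :=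
  (∏ C : {C // C ∈ 𝒢}, margAt q C.1 v) /
    ∏ e ∈ G.edgeFinset,
      Sym2.lift ⟨fun X Y => margAt q (X.1 ∩ Y.1) v,
        fun X Y => congrArg (fun S => margAt q S v) (Finset.inter_comm _ _)⟩ e

/-- A function on full binary vectors that only depends on the attributes in `C`. -/
def DependsOnlyOn {K : ℕ} (p : (Fin K → Bool) → ℝ) (C : Finset (Fin K)) : Prop :=
  ∀ v w, (∀ i ∈ C, v i = w i) → p v = p w

/-- Empirical distribution of a dataset of `N` transactions. -/
noncomputable def empirical {K N : ℕ} (D : Fin N → (Fin K → Bool)) :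
    (Fin K → Bool) → ℝ :=
  fun v => ((Finset.univ.filter (fun t => D t = v)).card : ℝ) / N



namespace JT

variable {K : ℕ}

/-- Patch `v` with values `b` on the coordinates in `X`. -/
noncomputable def emb (X : Finset (Fin K)) (v : Fin K → Bool) (b : {i // i ∈ X} → Bool) :
    Fin K → Bool :=
  fun i => if h : i ∈ X then b ⟨i, h⟩ else v i

lemma emb_mem {X : Finset (Fin K)} (v : Fin K → Bool) (b) {i : Fin K} (h : i ∈ X) :
    emb X v b i = b ⟨i, h⟩ := dif_pos h

lemma emb_not_mem {X : Finset (Fin K)} (v : Fin K → Bool) (b) {i : Fin K} (h : i ∉ X) :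
    emb X v b i = v i := dif_neg h

lemma margAt_congr (q : (Fin K → Bool) → ℝ) {X : Finset (Fin K)} {v v' : Fin K → Bool}
    (h : ∀ i ∈ X, v i = v' i) : margAt q X v = margAt q X v' := by
  unfold margAt
  refine Finset.sum_congr rfl fun w _ => ?_
  congr 1
  simp only [eq_iff_iff]
  constructor <;> intro hh i hi
  · rw [← h i hi]; exact hh i hi
  · rw [h i hi]; exact hh i hi

lemma margAt_emb_disjoint (q : (Fin K → Bool) → ℝ) {X R : Finset (Fin K)}
    (h : ∀ i ∈ X, i ∉ R) (v : Fin K → Bool) (b) :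
    margAt q X (emb R v b) = margAt q X v :=
  margAt_congr q fun i hi => emb_not_mem v b (h i hi)

lemma margAt_nonneg {q : (Fin K → Bool) → ℝ} (hq : ∀ v, 0 ≤ q v) (X : Finset (Fin K))
    (v : Fin K → Bool) : 0 ≤ margAt q X v :=
  Finset.sum_nonneg fun w _ => by split <;> simp [hq w]

lemma margAt_pos {q : (Fin K → Bool) → ℝ} (hq : ∀ v, 0 < q v) (X : Finset (Fin K))
    (v : Fin K → Bool) : 0 < margAt q X v := by
  classical
  set w₀ : Fin K → Bool := fun i => if i ∈ X then v i else false with hw₀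
  have hcond : ∀ i ∈ X, w₀ i = v i := fun i hi => by simp [hw₀, hi]
  refine Finset.sum_pos' (fun w _ => by split <;> simp [(hq w).le]) ⟨w₀, Finset.mem_univ _, ?_⟩
  rw [if_pos hcond]; exact hq w₀

lemma margAt_empty {q : (Fin K → Bool) → ℝ} (hq : ∑ v, q v = 1) (v : Fin K → Bool) :
    margAt q ∅ v = 1 := by
  unfold margAt
  simp [hq]

/-- Summing a marginal over all assignments to `R ⊆ C` gives the marginal on `C \ R`. -/
lemma sum_emb_margAt (q : (Fin K → Bool) → ℝ) {R C : Finset (Fin K)} (hRC : R ⊆ C)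
    (v : Fin K → Bool) :
    ∑ b : {i // i ∈ R} → Bool, margAt q C (emb R v b) = margAt q (C \ R) v := by
  unfold margAt
  rw [Finset.sum_comm]
  refine Finset.sum_congr rfl fun w _ => ?_
  have key : ∀ b : {i // i ∈ R} → Bool,
      (∀ i ∈ C, w i = emb R v b i) ↔ (b = fun i => w i.1) ∧ ∀ i ∈ C \ R, w i = v i := by
    intro b
    constructor
    · intro h
      constructor
      · funext i
        have := h i.1 (hRC i.2)
        rw [emb_mem v b i.2] at this
        exact this.symm
      · intro i hi
        have hiR : i ∉ R := (Finset.mem_sdiff.1 hi).2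
        have := h i (Finset.mem_sdiff.1 hi).1
        rwa [emb_not_mem v b hiR] at this
    · rintro ⟨hb, hv⟩ i hi
      by_cases hiR : i ∈ R
      · rw [emb_mem v b hiR, hb]
      · rw [emb_not_mem v b hiR]
        exact hv i (Finset.mem_sdiff.2 ⟨hi, hiR⟩)
  calc ∑ b : {i // i ∈ R} → Bool, (if ∀ i ∈ C, w i = emb R v b i then q w else 0)
      = ∑ b : {i // i ∈ R} → Bool,
          (if b = (fun i => w i.1) then (if ∀ i ∈ C \ R, w i = v i then q w else 0) else 0) := by
        refine Finset.sum_congr rfl fun b _ => ?_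
        rw [if_congr (key b) rfl rfl]
        by_cases h1 : b = (fun i : {i // i ∈ R} => w i.1) <;>
          by_cases h2 : ∀ i ∈ C \ R, w i = v i <;> simp [h1, h2]
    _ = if ∀ i ∈ C \ R, w i = v i then q w else 0 := by
        rw [Finset.sum_ite_eq' Finset.univ]
        simp

/-- A marginal as a sum over assignments to the complementary coordinates. -/
lemma margAt_eq_sum (p : (Fin K → Bool) → ℝ) (S : Finset (Fin K)) (v : Fin K → Bool) :
    margAt p S v = ∑ b : {i // i ∈ Finset.univ \ S} → Bool, p (emb (Finset.univ \ S) v b) := by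
  have h := sum_emb_margAt p (R := Finset.univ \ S) (C := Finset.univ) (Finset.sdiff_subset) v
  have h2 : (Finset.univ : Finset (Fin K)) \ (Finset.univ \ S) = S := by
    simp [Finset.sdiff_sdiff_self_left]
  rw [h2] at h
  rw [← h]
  refine Finset.sum_congr rfl fun b _ => ?_
  unfold margAt
  rw [Finset.sum_eq_single (emb (Finset.univ \ S) v b)]
  · rw [if_pos fun i _ => rfl]
  · intro w _ hw
    rw [if_neg]
    intro hc
    exact hw (funext fun i => hc i (Finset.mem_univ i))
  · simp

/-- Splitting a sum over assignments to a disjoint union. -/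
lemma sum_emb_union {P Q : Finset (Fin K)} (hPQ : ∀ i ∈ P, i ∉ Q) (v : Fin K → Bool)
    (f : (Fin K → Bool) → ℝ) :
    ∑ b : {i // i ∈ P ∪ Q} → Bool, f (emb (P ∪ Q) v b) =
      ∑ c : {i // i ∈ P} → Bool, ∑ d : {i // i ∈ Q} → Bool, f (emb Q (emb P v c) d) := by
  classical
  set g : (({i // i ∈ P} → Bool) × ({i // i ∈ Q} → Bool)) → ({i // i ∈ P ∪ Q} → Bool) :=
    fun cd i => if h : i.1 ∈ Q then cd.2 ⟨i.1, h⟩ else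
      cd.1 ⟨i.1, (Finset.mem_union.1 i.2).resolve_right h⟩ with hg
  have hbij : Function.Bijective g := by
    constructor
    · rintro ⟨c, d⟩ ⟨c', d'⟩ h
      have hc : c = c' := by
        funext i
        have hiQ : i.1 ∉ Q := hPQ i.1 i.2
        have := congrFun h ⟨i.1, Finset.mem_union_left _ i.2⟩
        simpa [hg, hiQ] using this
      have hd : d = d' := by
        funext i
        have := congrFun h ⟨i.1, Finset.mem_union_right _ i.2⟩
        simpa [hg, i.2] using this
      rw [Prod.ext_iff]; exact ⟨hc, hd⟩
    · intro b
      refine ⟨⟨fun i => b ⟨i.1, Finset.mem_union_left _ i.2⟩,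
        fun i => b ⟨i.1, Finset.mem_union_right _ i.2⟩⟩, ?_⟩
      funext i
      by_cases h : i.1 ∈ Q <;> simp [hg, h]
  have compat : ∀ cd : ({i // i ∈ P} → Bool) × ({i // i ∈ Q} → Bool),
      emb (P ∪ Q) v (g cd) = emb Q (emb P v cd.1) cd.2 := by
    intro cd
    funext i
    by_cases hq : i ∈ Q
    · rw [emb_mem _ _ hq, emb_mem _ _ (Finset.mem_union_right _ hq)]
      simp [hg, hq]
    by_cases hp : i ∈ P
    · rw [emb_not_mem _ _ hq, emb_mem _ _ hp, emb_mem _ _ (Finset.mem_union_left _ hp)]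
      simp [hg, hq]
    · rw [emb_not_mem _ _ hq, emb_not_mem _ _ hp,
        emb_not_mem _ _ (by simp [hp, hq] : i ∉ P ∪ Q)]
  calc ∑ b : {i // i ∈ P ∪ Q} → Bool, f (emb (P ∪ Q) v b)
      = ∑ cd : ({i // i ∈ P} → Bool) × ({i // i ∈ Q} → Bool),
          f (emb Q (emb P v cd.1) cd.2) :=
        (Fintype.sum_bijective g hbij _ _ (fun cd => by rw [compat cd])).symm
    _ = _ := by rw [Fintype.sum_prod_type]



variable {V : Type*} {G : SimpleGraph V}

/-- In a path starting at `a`, at most one edge contains `a`. -/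
lemma eq_of_adj_edges_mem {a b : V} {r : G.Walk a b} (hr : r.IsPath) {x y : V}
    (hx : s(a, x) ∈ r.edges) (hy : s(a, y) ∈ r.edges) : x = y := by
  cases r with
  | nil => simp at hx
  | cons h' r' =>
    rw [SimpleGraph.Walk.cons_isPath_iff] at hr
    rw [SimpleGraph.Walk.edges_cons, List.mem_cons] at hx hy
    have hmem : ∀ z : V, s(a, z) ∈ r'.edges → False := fun z hz =>
      hr.2 (r'.fst_mem_support_of_mem_edges hz)
    rcases hx with hx | hx
    · rcases hy with hy | hy
      · exact (Sym2.congr_right.1 hx).trans (Sym2.congr_right.1 hy).symm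
      · exact absurd hy (hmem y)
    · exact absurd hx (hmem x)

/-- A finite nonempty acyclic graph has a vertex with at most one neighbour. -/
lemma exists_leaf [Fintype V] [Nonempty V] (hG : G.IsAcyclic) :
    ∃ v : V, ∀ w₁ w₂, G.Adj v w₁ → G.Adj v w₂ → w₁ = w₂ := by
  classical
  set N := Fintype.card V
  set P : ℕ → Prop := fun n => ∃ (u v : V) (p : G.Walk u v), p.IsPath ∧ p.length = n with hP
  have hP0 : P 0 := ⟨Classical.arbitrary V, _, SimpleGraph.Walk.nil, by simp⟩
  set n := Nat.findGreatest P N with hn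
  obtain ⟨u, v, p, hp, hlen⟩ : P n :=
    Nat.findGreatest_spec (Nat.zero_le N) hP0
  refine ⟨v, fun w₁ w₂ h₁ h₂ => ?_⟩
  have hsupp : ∀ w, G.Adj v w → w ∈ p.support := by
    intro w hw
    by_contra hws
    have hpath : (p.concat hw).IsPath := by
      rw [← SimpleGraph.Walk.isPath_reverse_iff, SimpleGraph.Walk.reverse_concat,
        SimpleGraph.Walk.cons_isPath_iff, SimpleGraph.Walk.isPath_reverse_iff,
        SimpleGraph.Walk.support_reverse]
      exact ⟨hp, by simpa using hws⟩
    have hmem : P (n + 1) := ⟨u, w, p.concat hw, hpath, by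
      rw [SimpleGraph.Walk.length_concat, hlen]⟩
    have : n + 1 ≤ n := Nat.le_findGreatest (by
      have := hpath.length_lt
      rw [SimpleGraph.Walk.length_concat, hlen] at this
      omega) hmem
    omega
  have hedge : ∀ w, G.Adj v w → s(v, w) ∈ p.edges := by
    intro w hw
    have hws := hsupp w hw
    set d := p.dropUntil w hws with hd
    have hdp : d.IsPath := hp.dropUntil hws
    have hmemd : s(v, w) ∈ d.edges := by
      by_contra hne
      exact hG _ ((SimpleGraph.Walk.cons_isCycle_iff d hw).2 ⟨hdp, hne⟩)
    exact SimpleGraph.Walk.edges_dropUntil_subset p hws hmemd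
  have h₁' : s(v, w₁) ∈ p.reverse.edges := by
    rw [SimpleGraph.Walk.edges_reverse, List.mem_reverse]; exact hedge _ h₁
  have h₂' : s(v, w₂) ∈ p.reverse.edges := by
    rw [SimpleGraph.Walk.edges_reverse, List.mem_reverse]; exact hedge _ h₂
  exact eq_of_adj_edges_mem ((SimpleGraph.Walk.isPath_reverse_iff p).2 hp) h₁' h₂'

/-- If `L` has at most one neighbour then no path between two vertices distinct from `L`
passes through `L`. -/
lemma not_mem_support_of_leaf {L : V} (hleaf : ∀ w₁ w₂, G.Adj L w₁ → G.Adj L w₂ → w₁ = w₂)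
    {X Y : V} (p : G.Walk X Y) (hp : p.IsPath) (hX : X ≠ L) (hY : Y ≠ L) :
    ∀ Z ∈ p.support, Z ≠ L := by
  intro Z hZ hZL
  subst hZL
  have hLs : Z ∈ p.support := hZ
  set t := p.takeUntil Z hLs with ht
  set d := p.dropUntil Z hLs with hdd
  have hspec : t.append d = p := p.take_spec hLs
  have htp : t.IsPath := hp.takeUntil hLs
  have hdp : d.IsPath := hp.dropUntil hLs
  obtain ⟨Z₁, hadj₁, r₁, hr₁⟩ := SimpleGraph.Walk.exists_eq_cons_of_ne (Ne.symm hX) t.reverse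
  obtain ⟨Z₂, hadj₂, r₂, hr₂⟩ := SimpleGraph.Walk.exists_eq_cons_of_ne (Ne.symm hY) d
  have hZ12 : Z₁ = Z₂ := hleaf _ _ hadj₁ hadj₂
  have h1 : Z₁ ∈ t.support := by
    have : Z₁ ∈ t.reverse.support := by rw [hr₁]; simp
    rwa [SimpleGraph.Walk.support_reverse, List.mem_reverse] at this
  have h2 : Z₂ ∈ d.support.tail := by
    rw [hr₂]; simp
  have hnodup := hp.support_nodup
  rw [← hspec, SimpleGraph.Walk.support_append, List.nodup_append] at hnodup
  exact hnodup.2.2 _ h1 _ h2 hZ12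

/-- If `L` is a leaf and `p` is a path ending at `L` (from `X ≠ L`), then the unique
neighbour of `L` lies on `p`. -/
lemma neighbor_mem_support {L M : V} (hadjM : G.Adj L M)
    (hleaf : ∀ w₁ w₂, G.Adj L w₁ → G.Adj L w₂ → w₁ = w₂)
    {X : V} (p : G.Walk X L) (hX : X ≠ L) : M ∈ p.support := by
  obtain ⟨Z, hadj, r, hr⟩ := SimpleGraph.Walk.exists_eq_cons_of_ne (Ne.symm hX) p.reverse
  have hZM : Z = M := hleaf _ _ hadj hadjM
  have : Z ∈ p.reverse.support := by rw [hr]; simp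
  rwa [SimpleGraph.Walk.support_reverse, List.mem_reverse, hZM] at this


section Restrict

variable {K : ℕ} {𝒢 : Finset (Finset (Fin K))} {G : SimpleGraph {C // C ∈ 𝒢}}

/-- Inclusion of the cliques other than `L` into all cliques. -/
def ι (L : {C // C ∈ 𝒢}) : {C // C ∈ 𝒢.erase L.1} → {C // C ∈ 𝒢} :=
  fun C => ⟨C.1, Finset.mem_of_mem_erase C.2⟩

lemma ι_inj (L : {C // C ∈ 𝒢}) : Function.Injective (ι L) := fun a b h =>
  Subtype.ext (show (ι L a).1 = (ι L b).1 from congrArg Subtype.val h)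

lemma mem_erase_of_ne {L Z : {C // C ∈ 𝒢}} (h : Z ≠ L) : Z.1 ∈ 𝒢.erase L.1 :=
  Finset.mem_erase.2 ⟨fun hh => h (Subtype.ext hh), Z.2⟩

lemma ne_of_mem_erase {L : {C // C ∈ 𝒢}} (C' : {C // C ∈ 𝒢.erase L.1}) : ι L C' ≠ L := by
  intro h
  exact (Finset.mem_erase.1 C'.2).1 (congrArg Subtype.val h)

/-- The homomorphism from the restricted graph. -/
def ιhom (L : {C // C ∈ 𝒢}) : SimpleGraph.comap (ι L) G →g G := SimpleGraph.Hom.comap (ι L) G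

lemma lift_reachable (L : {C // C ∈ 𝒢}) :
    ∀ {X Y : {C // C ∈ 𝒢}} (w : G.Walk X Y), (∀ Z ∈ w.support, Z ≠ L) →
      ∀ (hX : X.1 ∈ 𝒢.erase L.1) (hY : Y.1 ∈ 𝒢.erase L.1),
      (SimpleGraph.comap (ι L) G).Reachable ⟨X.1, hX⟩ ⟨Y.1, hY⟩ := by
  intro X Y w
  induction w with
  | nil => intro _ hX hY; exact SimpleGraph.Reachable.refl _
  | @cons A B C h p ih =>
    intro hsup hX hY
    have hB : B.1 ∈ 𝒢.erase L.1 :=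
      mem_erase_of_ne (hsup B (by simp [SimpleGraph.Walk.support_cons]))
    have hadj : (SimpleGraph.comap (ι L) G).Adj ⟨A.1, hX⟩ ⟨B.1, hB⟩ := h
    exact hadj.reachable.trans
      (ih (fun Z hZ => hsup Z (by simp [SimpleGraph.Walk.support_cons, hZ])) hB hY)

lemma restrict_isJunctionTree (L : {C // C ∈ 𝒢}) (hJT : IsJunctionTree 𝒢 G)
    (hleaf : ∀ w₁ w₂, G.Adj L w₁ → G.Adj L w₂ → w₁ = w₂) :
    IsJunctionTree (𝒢.erase L.1) (SimpleGraph.comap (ι L) G) := by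
  obtain ⟨hac, hint, hreach, hrip⟩ := hJT
  refine ⟨?_, ?_, ?_, ?_⟩
  · intro x c hc
    exact hac _ (hc.map (f := ιhom L) (ι_inj L))
  · intro X Y h
    exact hint _ _ h
  · intro X Y a haX haY
    obtain ⟨w⟩ := hreach (ι L X) (ι L Y) a haX haY
    set p := w.toPath
    have hXL : ι L X ≠ L := ne_of_mem_erase X
    have hYL : ι L Y ≠ L := ne_of_mem_erase Y
    have hsup := not_mem_support_of_leaf hleaf (p : G.Walk _ _) p.2 hXL hYL
    exact lift_reachable L (X := ι L X) (Y := ι L Y) (p : G.Walk _ _) hsup X.2 Y.2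
  · intro X Y a haX haY w' hw' Z hZ
    have hmap : (w'.map (ιhom L)).IsPath :=
      SimpleGraph.Walk.map_isPath_of_injective (ι_inj L) hw'
    have := hrip (ι L X) (ι L Y) a haX haY (w'.map (ιhom L)) hmap (ι L Z)
      (by have h := List.mem_map_of_mem (f := ιhom (G := G) L) hZ; rw [← SimpleGraph.Walk.support_map] at h; exact h)
    exact this

lemma leaf_inter_subset (L M : {C // C ∈ 𝒢}) (hJT : IsJunctionTree 𝒢 G)
    (hadjM : G.Adj L M) (hleaf : ∀ w₁ w₂, G.Adj L w₁ → G.Adj L w₂ → w₁ = w₂) :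
    L.1 ∩ (𝒢.erase L.1).sup id ⊆ L.1 ∩ M.1 := by
  intro a ha
  rw [Finset.mem_inter] at ha
  obtain ⟨haL, haU⟩ := ha
  rw [Finset.mem_sup] at haU
  obtain ⟨X, hX, haX⟩ := haU
  set XV : {C // C ∈ 𝒢} := ⟨X, Finset.mem_of_mem_erase hX⟩ with hXV
  have hXL : XV ≠ L := fun h => (Finset.mem_erase.1 hX).1 (congrArg Subtype.val h)
  obtain ⟨w⟩ := hJT.2.2.1 XV L a haX haL
  set p := w.toPath
  have hM : M ∈ (p : G.Walk _ _).support := neighbor_mem_support hadjM hleaf _ hXL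
  have := hJT.2.2.2 XV L a haX haL (p : G.Walk _ _) p.2 M hM
  exact Finset.mem_inter.2 ⟨haL, this⟩

lemma isolated_inter (L : {C // C ∈ 𝒢}) (hJT : IsJunctionTree 𝒢 G)
    (hiso : ∀ w, ¬ G.Adj L w) :
    L.1 ∩ (𝒢.erase L.1).sup id = ∅ := by
  rw [Finset.eq_empty_iff_forall_notMem]
  intro a ha
  rw [Finset.mem_inter] at ha
  obtain ⟨haL, haU⟩ := ha
  rw [Finset.mem_sup] at haU
  obtain ⟨X, hX, haX⟩ := haU
  set XV : {C // C ∈ 𝒢} := ⟨X, Finset.mem_of_mem_erase hX⟩ with hXV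
  have hXL : L ≠ XV := fun h => (Finset.mem_erase.1 hX).1 (congrArg Subtype.val h).symm
  obtain ⟨w⟩ := hJT.2.2.1 L XV a haL haX
  obtain ⟨Z, hadj, r, hr⟩ := SimpleGraph.Walk.exists_eq_cons_of_ne hXL w
  exact hiso Z hadj

end Restrict

section Factor

variable {K : ℕ} {𝒢 : Finset (Finset (Fin K))} {G : SimpleGraph {C // C ∈ 𝒢}}

lemma jtDist_congr (q : (Fin K → Bool) → ℝ) (𝒢 : Finset (Finset (Fin K)))
    (G : SimpleGraph {C // C ∈ 𝒢}) {v v' : Fin K → Bool}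
    (h : ∀ i ∈ 𝒢.sup id, v i = v' i) : jtDist q 𝒢 G v = jtDist q 𝒢 G v' := by
  unfold jtDist
  congr 1
  · refine Finset.prod_congr rfl fun C _ => ?_
    refine margAt_congr q fun i hi => h i ?_
    exact Finset.le_sup (f := id) C.2 hi
  · refine Finset.prod_congr rfl fun e _ => ?_
    induction e using Sym2.ind with
    | _ X Y =>
      rw [Sym2.lift_mk, Sym2.lift_mk]
      refine margAt_congr q fun i hi => h i ?_
      exact Finset.le_sup (f := id) X.2 (Finset.mem_inter.1 hi).1

lemma prod_vertices (L : {C // C ∈ 𝒢}) (f : {C // C ∈ 𝒢} → ℝ) :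
    ∏ C : {C // C ∈ 𝒢}, f C = f L * ∏ C' : {C // C ∈ 𝒢.erase L.1}, f (ι L C') := by
  rw [← Finset.mul_prod_erase Finset.univ f (Finset.mem_univ L)]
  congr 1
  refine (Finset.prod_bij (fun C' _ => ι L C') ?_ ?_ ?_ ?_).symm
  · intro C' _
    exact Finset.mem_erase.2 ⟨ne_of_mem_erase C', Finset.mem_univ _⟩
  · intro a _ b _ h
    exact ι_inj L h
  · intro C hC
    refine ⟨⟨C.1, mem_erase_of_ne (Finset.mem_erase.1 hC).1⟩, Finset.mem_univ _, rfl⟩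
  · intro C' _; rfl

lemma prod_edges_leaf (L M : {C // C ∈ 𝒢}) (hadjM : G.Adj L M)
    (hleaf : ∀ w₁ w₂, G.Adj L w₁ → G.Adj L w₂ → w₁ = w₂)
    (F : Sym2 {C // C ∈ 𝒢} → ℝ) (F' : Sym2 {C // C ∈ 𝒢.erase L.1} → ℝ)
    (hcompat : ∀ e', F (Sym2.map (ι L) e') = F' e') :
    ∏ e ∈ G.edgeFinset, F e =
      F s(L, M) * ∏ e' ∈ (SimpleGraph.comap (ι L) G).edgeFinset, F' e' := by
  have hLM : s(L, M) ∈ G.edgeFinset := SimpleGraph.mem_edgeFinset.2 hadjM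
  rw [← Finset.mul_prod_erase G.edgeFinset F hLM]
  congr 1
  refine (Finset.prod_bij (fun e' _ => Sym2.map (ι L) e') ?_ ?_ ?_ ?_).symm
  · intro e' he'
    induction e' using Sym2.ind with
    | _ X Y =>
      rw [SimpleGraph.mem_edgeFinset] at he'
      have hadj : G.Adj (ι L X) (ι L Y) := he'
      show Sym2.map (ι L) s(X, Y) ∈ G.edgeFinset.erase s(L, M)
      rw [Sym2.map_pair_eq]
      refine Finset.mem_erase.2 ⟨?_, SimpleGraph.mem_edgeFinset.2 hadj⟩
      intro hcontra
      rw [Sym2.eq_iff] at hcontra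
      rcases hcontra with ⟨h1, _⟩ | ⟨_, h2⟩
      · exact ne_of_mem_erase X h1
      · exact ne_of_mem_erase Y h2
  · intro a _ b _ h
    exact Sym2.map.injective (ι_inj L) h
  · intro e he
    rw [Finset.mem_erase] at he
    obtain ⟨hne, hmem⟩ := he
    induction e using Sym2.ind with
    | _ A B =>
      rw [SimpleGraph.mem_edgeFinset, SimpleGraph.mem_edgeSet] at hmem
      have hA : A ≠ L := by
        rintro rfl
        exact hne (by rw [Sym2.eq_iff]; exact Or.inl ⟨rfl, hleaf _ _ hmem hadjM⟩)
      have hB : B ≠ L := by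
        rintro rfl
        exact hne (by rw [Sym2.eq_iff]; exact Or.inr ⟨hleaf _ _ hmem.symm hadjM, rfl⟩)
      refine ⟨s(⟨A.1, mem_erase_of_ne hA⟩, ⟨B.1, mem_erase_of_ne hB⟩), ?_, ?_⟩
      · rw [SimpleGraph.mem_edgeFinset]
        exact (hmem : G.Adj A B)
      · show Sym2.map (ι L) s(⟨A.1, mem_erase_of_ne hA⟩, ⟨B.1, mem_erase_of_ne hB⟩) = s(A, B)
        rw [Sym2.map_pair_eq]
        rfl
  · intro e' _
    exact (hcompat e').symm

lemma prod_edges_iso (L : {C // C ∈ 𝒢}) (hiso : ∀ w, ¬ G.Adj L w)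
    (F : Sym2 {C // C ∈ 𝒢} → ℝ) (F' : Sym2 {C // C ∈ 𝒢.erase L.1} → ℝ)
    (hcompat : ∀ e', F (Sym2.map (ι L) e') = F' e') :
    ∏ e ∈ G.edgeFinset, F e = ∏ e' ∈ (SimpleGraph.comap (ι L) G).edgeFinset, F' e' := by
  refine (Finset.prod_bij (fun e' _ => Sym2.map (ι L) e') ?_ ?_ ?_ ?_).symm
  · intro e' he'
    induction e' using Sym2.ind with
    | _ X Y =>
      rw [SimpleGraph.mem_edgeFinset] at he'
      have hadj : G.Adj (ι L X) (ι L Y) := he'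
      show Sym2.map (ι L) s(X, Y) ∈ G.edgeFinset
      rw [Sym2.map_pair_eq]
      exact SimpleGraph.mem_edgeFinset.2 hadj
  · intro a _ b _ h
    exact Sym2.map.injective (ι_inj L) h
  · intro e hmem
    induction e using Sym2.ind with
    | _ A B =>
      rw [SimpleGraph.mem_edgeFinset, SimpleGraph.mem_edgeSet] at hmem
      have hA : A ≠ L := by rintro rfl; exact hiso B hmem
      have hB : B ≠ L := by rintro rfl; exact hiso A hmem.symm
      refine ⟨s(⟨A.1, mem_erase_of_ne hA⟩, ⟨B.1, mem_erase_of_ne hB⟩), ?_, ?_⟩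
      · rw [SimpleGraph.mem_edgeFinset]
        exact (hmem : G.Adj A B)
      · show Sym2.map (ι L) s(⟨A.1, mem_erase_of_ne hA⟩, ⟨B.1, mem_erase_of_ne hB⟩) = s(A, B)
        rw [Sym2.map_pair_eq]
        rfl
  · intro e' _
    exact (hcompat e').symm

lemma jtDist_factor_leaf (q : (Fin K → Bool) → ℝ) (L M : {C // C ∈ 𝒢}) (hadjM : G.Adj L M)
    (hleaf : ∀ w₁ w₂, G.Adj L w₁ → G.Adj L w₂ → w₁ = w₂) (v : Fin K → Bool) :
    jtDist q 𝒢 G v = margAt q L.1 v / margAt q (L.1 ∩ M.1) v *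
      jtDist q (𝒢.erase L.1) (SimpleGraph.comap (ι L) G) v := by
  unfold jtDist
  rw [prod_vertices L (fun C => margAt q C.1 v)]
  rw [prod_edges_leaf L M hadjM hleaf _
    (Sym2.lift ⟨fun X Y => margAt q (X.1 ∩ Y.1) v,
      fun X Y => congrArg (fun S => margAt q S v) (Finset.inter_comm _ _)⟩)
    (fun e' => by
      induction e' using Sym2.ind with
      | _ X Y => rw [Sym2.map_pair_eq, Sym2.lift_mk, Sym2.lift_mk]; rfl)]
  rw [Sym2.lift_mk]
  rw [div_mul_div_comm]
  rfl

lemma jtDist_factor_iso (q : (Fin K → Bool) → ℝ) (L : {C // C ∈ 𝒢})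
    (hiso : ∀ w, ¬ G.Adj L w) (v : Fin K → Bool) :
    jtDist q 𝒢 G v = margAt q L.1 v *
      jtDist q (𝒢.erase L.1) (SimpleGraph.comap (ι L) G) v := by
  unfold jtDist
  rw [prod_vertices L (fun C => margAt q C.1 v)]
  rw [prod_edges_iso L hiso _
    (Sym2.lift ⟨fun X Y => margAt q (X.1 ∩ Y.1) v,
      fun X Y => congrArg (fun S => margAt q S v) (Finset.inter_comm _ _)⟩)
    (fun e' => by
      induction e' using Sym2.ind with
      | _ X Y => rw [Sym2.map_pair_eq, Sym2.lift_mk, Sym2.lift_mk]; rfl)]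
  rw [mul_div_assoc]
  rfl

end Factor

/-- The key normalization/marginalization result, by induction on the number of cliques. -/
lemma key {K : ℕ} (q : (Fin K → Bool) → ℝ) (hq1 : ∑ v, q v = 1) (hpos : ∀ v, 0 < q v) :
    ∀ (n : ℕ) (𝒢 : Finset (Finset (Fin K))) (G : SimpleGraph {C // C ∈ 𝒢}),
      𝒢.card = n → IsJunctionTree 𝒢 G →
      (∀ v, ∑ b : {i // i ∈ 𝒢.sup id} → Bool, jtDist q 𝒢 G (emb (𝒢.sup id) v b) = 1) ∧
      (∀ (C₀ : {C // C ∈ 𝒢}) (v : Fin K → Bool),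
        ∑ b : {i // i ∈ 𝒢.sup id \ C₀.1} → Bool,
          jtDist q 𝒢 G (emb (𝒢.sup id \ C₀.1) v b) = margAt q C₀.1 v) := by
  intro n
  induction n using Nat.strong_induction_on with
  | _ n IH =>
  intro 𝒢 G hcard hJT
  by_cases hGE : 𝒢 = ∅
  · subst hGE
    haveI hEV : IsEmpty {C // C ∈ (∅ : Finset (Finset (Fin K)))} := by
      constructor; rintro ⟨C, hC⟩; simp at hC
    constructor
    · intro v
      haveI : IsEmpty {i : Fin K // i ∈ (∅ : Finset (Finset (Fin K))).sup id} := by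
        constructor; rintro ⟨i, hi⟩; simp at hi
      haveI : Unique ({i : Fin K // i ∈ (∅ : Finset (Finset (Fin K))).sup id} → Bool) :=
        Pi.uniqueOfIsEmpty _
      rw [Fintype.sum_unique]
      have he : G.edgeFinset = ∅ := by
        rw [Finset.eq_empty_iff_forall_notMem]
        intro e he
        induction e using Sym2.ind with
        | _ X Y => exact hEV.elim X
      unfold jtDist
      rw [he]
      simp
    · intro C₀
      exact hEV.elim C₀
  have hne : 𝒢.Nonempty := Finset.nonempty_of_ne_empty hGE
  haveI : Nonempty {C // C ∈ 𝒢} := ⟨⟨hne.choose, hne.choose_spec⟩⟩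
  obtain ⟨L, hleaf⟩ := exists_leaf hJT.1
  have hJT' : IsJunctionTree (𝒢.erase L.1) (SimpleGraph.comap (ι L) G) :=
    restrict_isJunctionTree L hJT hleaf
  have hcard' : (𝒢.erase L.1).card < n := by
    rw [← hcard]; exact Finset.card_erase_lt_of_mem L.2
  obtain ⟨IHA, IHB⟩ := IH (𝒢.erase L.1).card hcard' (𝒢.erase L.1)
    (SimpleGraph.comap (ι L) G) rfl hJT'
  set U' : Finset (Fin K) := (𝒢.erase L.1).sup id with hU'def
  set W : (Fin K → Bool) → ℝ := jtDist q 𝒢 G with hWdef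
  set W' : (Fin K → Bool) → ℝ := jtDist q (𝒢.erase L.1) (SimpleGraph.comap (ι L) G) with hW'def
  have hW'congr : ∀ {x y : Fin K → Bool}, (∀ i ∈ U', x i = y i) → W' x = W' y :=
    fun h => jtDist_congr q _ _ h
  obtain ⟨S, hSU', hSL, hLS, hfact, hSsum⟩ :
      ∃ S : Finset (Fin K), S ⊆ U' ∧ S ⊆ L.1 ∧ L.1 ∩ U' = S ∧
        (∀ v, W v = margAt q L.1 v / margAt q S v * W' v) ∧
        (∀ v, ∑ b : {i // i ∈ U' \ S} → Bool, W' (emb (U' \ S) v b) = margAt q S v) := by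
    by_cases hM : ∃ M, G.Adj L M
    · obtain ⟨M, hadjM⟩ := hM
      have hML : M ≠ L := fun h => G.irrefl (h ▸ hadjM).symm
      have hM' : M.1 ∈ 𝒢.erase L.1 := mem_erase_of_ne hML
      have hMU' : M.1 ⊆ U' := Finset.le_sup (f := id) hM'
      refine ⟨L.1 ∩ M.1, ?_, Finset.inter_subset_left, ?_, fun v => jtDist_factor_leaf q L M hadjM hleaf v, ?_⟩
      · exact fun a ha => hMU' (Finset.mem_inter.1 ha).2
      · -- L.1 ∩ U' = L.1 ∩ M.1
        refine Finset.Subset.antisymm (leaf_inter_subset L M hJT hadjM hleaf) ?_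
        intro a ha
        rw [Finset.mem_inter] at ha ⊢
        exact ⟨ha.1, hMU' ha.2⟩
      · intro v
        have hsplit : U' \ (L.1 ∩ M.1) = (M.1 \ (L.1 ∩ M.1)) ∪ (U' \ M.1) := by
          ext a
          simp only [Finset.mem_sdiff, Finset.mem_union, Finset.mem_inter]
          constructor
          · rintro ⟨haU, haS⟩
            by_cases haM : a ∈ M.1
            · exact Or.inl ⟨haM, haS⟩
            · exact Or.inr ⟨haU, haM⟩
          · rintro (⟨haM, haS⟩ | ⟨haU, haM⟩)
            · exact ⟨hMU' haM, haS⟩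
            · exact ⟨haU, fun h => haM h.2⟩
        rw [hsplit]
        rw [sum_emb_union (fun i hi hi2 => (Finset.mem_sdiff.1 hi2).2 (Finset.mem_sdiff.1 hi).1)]
        have hinner : ∀ c : {i // i ∈ M.1 \ (L.1 ∩ M.1)} → Bool,
            ∑ d : {i // i ∈ U' \ M.1} → Bool,
              W' (emb (U' \ M.1) (emb (M.1 \ (L.1 ∩ M.1)) v c) d) =
            margAt q M.1 (emb (M.1 \ (L.1 ∩ M.1)) v c) := by
          intro c
          exact IHB ⟨M.1, hM'⟩ (emb (M.1 \ (L.1 ∩ M.1)) v c)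
        rw [Finset.sum_congr rfl fun c _ => hinner c]
        rw [sum_emb_margAt q Finset.sdiff_subset v]
        congr 1
        rw [Finset.sdiff_sdiff_self_left]
        ext a
        simp only [Finset.inf_eq_inter, Finset.mem_inter]
        tauto
    · push_neg at hM
      have hLS : L.1 ∩ U' = ∅ := isolated_inter L hJT hM
      refine ⟨∅, Finset.empty_subset _, Finset.empty_subset _, hLS, ?_, ?_⟩
      · intro v
        rw [margAt_empty hq1, div_one]
        exact jtDist_factor_iso q L hM v
      · intro v
        rw [margAt_empty hq1, Finset.sdiff_empty]
        exact IHA v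
  -- shared part
  set R : Finset (Fin K) := L.1 \ U' with hRdef
  have hRU' : ∀ i ∈ U', i ∉ R := fun i hi hir => (Finset.mem_sdiff.1 hir).2 hi
  have hRL : R ⊆ L.1 := Finset.sdiff_subset
  have hLR : L.1 \ R = S := by
    rw [hRdef, Finset.sdiff_sdiff_self_left, ← hLS]
  have hU : 𝒢.sup id = U' ∪ R := by
    have h1 : 𝒢 = insert L.1 (𝒢.erase L.1) := (Finset.insert_erase L.2).symm
    conv_lhs => rw [h1]
    rw [Finset.sup_insert]
    rw [hRdef]
    ext a
    simp only [Finset.sup_eq_union, Finset.mem_union, Finset.mem_sdiff, id]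
    tauto
  have hSne : ∀ x, margAt q S x ≠ 0 := fun x => (margAt_pos hpos S x).ne'
  have helim : ∀ x : Fin K → Bool,
      ∑ d : {i // i ∈ R} → Bool, W (emb R x d) = W' x := by
    intro x
    have h1 : ∀ d, W (emb R x d) = margAt q L.1 (emb R x d) * (W' x / margAt q S x) := by
      intro d
      rw [hfact]
      rw [margAt_emb_disjoint q (fun i hi => hRU' i (hSU' hi)) x d]
      rw [hW'congr (fun i hi => emb_not_mem x d (hRU' i hi))]
      ring
    rw [Finset.sum_congr rfl fun d _ => h1 d, ← Finset.sum_mul,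
      sum_emb_margAt q hRL x, hLR, mul_div_assoc', mul_div_cancel_left₀ _ (hSne x)]
  constructor
  · intro v
    rw [hU, sum_emb_union hRU']
    rw [Finset.sum_congr rfl fun c _ => helim (emb U' v c)]
    exact IHA v
  · intro C₀ v
    by_cases hC₀ : C₀ = L
    · subst hC₀
      have hT : 𝒢.sup id \ C₀.1 = U' \ S := by
        rw [hU]
        ext a
        simp only [Finset.mem_sdiff, Finset.mem_union]
        constructor
        · rintro ⟨haU | haR, haL⟩
          · exact ⟨haU, fun h => haL (hSL h)⟩
          · exact absurd (hRL haR) haL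
        · rintro ⟨haU, haS⟩
          refine ⟨Or.inl haU, fun haL => haS ?_⟩
          rw [← hLS]; exact Finset.mem_inter.2 ⟨haL, haU⟩
      rw [hT]
      have hconst : ∀ b : {i // i ∈ U' \ S} → Bool,
          W (emb (U' \ S) v b) = margAt q C₀.1 v / margAt q S v * W' (emb (U' \ S) v b) := by
        intro b
        rw [hfact]
        congr 2
        · refine margAt_congr q fun i hi => emb_not_mem v b ?_
          intro hcon
          rw [Finset.mem_sdiff] at hcon
          exact hcon.2 (by rw [← hLS]; exact Finset.mem_inter.2 ⟨hi, hcon.1⟩)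
        · refine margAt_congr q fun i hi => emb_not_mem v b ?_
          intro hcon
          exact (Finset.mem_sdiff.1 hcon).2 hi
      rw [Finset.sum_congr rfl fun b _ => hconst b, ← Finset.mul_sum, hSsum v,
        div_mul_cancel₀ _ (hSne v)]
    · have hC₀' : C₀.1 ∈ 𝒢.erase L.1 := mem_erase_of_ne hC₀
      have hC₀U' : C₀.1 ⊆ U' := Finset.le_sup (f := id) hC₀'
      have hT : 𝒢.sup id \ C₀.1 = (U' \ C₀.1) ∪ R := by
        rw [hU]
        ext a
        simp only [Finset.mem_sdiff, Finset.mem_union]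
        constructor
        · rintro ⟨haU | haR, haC⟩
          · exact Or.inl ⟨haU, haC⟩
          · exact Or.inr haR
        · rintro (⟨haU, haC⟩ | haR)
          · exact ⟨Or.inl haU, haC⟩
          · exact ⟨Or.inr haR, fun h => hRU' a (hC₀U' h) haR⟩
      rw [hT]
      rw [sum_emb_union (fun i hi => hRU' i (Finset.mem_sdiff.1 hi).1)]
      rw [Finset.sum_congr rfl fun c _ => helim (emb (U' \ C₀.1) v c)]
      exact IHB ⟨C₀.1, hC₀'⟩ v

/-- Gibbs' inequality with equality case. -/
lemma gibbs {K : ℕ} (p r : (Fin K → Bool) → ℝ) (hp : IsDistribution p)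
    (hr : IsDistribution r) (hrpos : ∀ v, 0 < r v)
    (hlog : ∑ v, p v * Real.log (r v) = ∑ v, r v * Real.log (r v)) :
    entDist p ≤ entDist r ∧ (entDist p = entDist r → p = r) := by
  classical
  set g : (Fin K → Bool) → ℝ := fun v => p v * Real.log (p v / r v) - (p v - r v) with hg
  have hgnn : ∀ v, 0 ≤ g v := by
    intro v
    rcases eq_or_lt_of_le (hp.1 v) with h0 | hpv
    · simp [hg, ← h0, (hrpos v).le]
    · have hlog2 : Real.log (r v / p v) ≤ r v / p v - 1 :=
        Real.log_le_sub_one_of_pos (div_pos (hrpos v) hpv)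
      have hkey : p v - r v ≤ p v * Real.log (p v / r v) := by
        have h1 : Real.log (p v / r v) = - Real.log (r v / p v) := by
          rw [← Real.log_inv, inv_div]
        rw [h1]
        have hmul := mul_le_mul_of_nonneg_left hlog2 hpv.le
        have h3 : p v * (r v / p v) = r v := mul_div_cancel₀ (r v) hpv.ne'
        have h4 : p v * (r v / p v - 1) = r v - p v := by rw [mul_sub, h3]; ring
        linarith
      simp only [hg, sub_nonneg]
      linarith
  have hterm : ∀ v, p v * Real.log (p v / r v) = p v * Real.log (p v) - p v * Real.log (r v) := by
    intro v
    rcases eq_or_lt_of_le (hp.1 v) with h0 | hpv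
    · simp [← h0]
    · rw [Real.log_div hpv.ne' (hrpos v).ne', mul_sub]
  have hsumg : ∑ v, g v = entDist r - entDist p := by
    unfold entDist
    simp only [hg]
    rw [Finset.sum_sub_distrib]
    rw [Finset.sum_congr rfl fun v _ => hterm v]
    rw [Finset.sum_sub_distrib, Finset.sum_sub_distrib, hlog, hp.2, hr.2]
    ring
  have hle : entDist p ≤ entDist r := by
    have : 0 ≤ ∑ v, g v := Finset.sum_nonneg fun v _ => hgnn v
    linarith [hsumg]
  refine ⟨hle, fun heq => ?_⟩
  have hzero : ∑ v, g v = 0 := by rw [hsumg, heq]; ring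
  have hall : ∀ v, g v = 0 := by
    intro v
    have := (Finset.sum_eq_zero_iff_of_nonneg fun v _ => hgnn v).1 hzero
    exact this v (Finset.mem_univ v)
  funext v
  by_contra hne
  have hgv := hall v
  rcases eq_or_lt_of_le (hp.1 v) with h0 | hpv
  · have : g v = r v := by simp [hg, ← h0]
    rw [this] at hgv
    exact (hrpos v).ne' hgv
  · have hratio : r v / p v ≠ 1 := by
      intro h1
      exact hne (by field_simp at h1; linarith)
    have hstrict : Real.log (r v / p v) < r v / p v - 1 :=
      Real.log_lt_sub_one_of_pos (div_pos (hrpos v) hpv) hratio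
    have h1 : Real.log (p v / r v) = - Real.log (r v / p v) := by
      rw [← Real.log_inv, inv_div]
    have h2 : p v * Real.log (p v / r v) > p v - r v := by
      rw [h1]
      have := mul_lt_mul_of_pos_left hstrict hpv
      have h3 : p v * (r v / p v) = r v := mul_div_cancel₀ (r v) hpv.ne'
      nlinarith
    simp only [hg] at hgv
    linarith

section Expect

variable {K : ℕ}

/-- Rewrite an expectation of a local function through the marginal. -/
lemma sum_mul_dependsOn (p : (Fin K → Bool) → ℝ) (C : Finset (Fin K))
    (f : (Fin K → Bool) → ℝ) (hf : ∀ v w, (∀ i ∈ C, v i = w i) → f v = f w) :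
    ∑ v, p v * f v = ∑ b : {i // i ∈ C} → Bool,
      margAt p C (emb C (fun _ => false) b) * f (emb C (fun _ => false) b) := by
  classical
  set z : Fin K → Bool := fun _ => false with hz
  have : ∀ b : {i // i ∈ C} → Bool, margAt p C (emb C z b) * f (emb C z b) =
      ∑ w : Fin K → Bool, (if (fun i : {i // i ∈ C} => w i.1) = b then p w * f w else 0) := by
    intro b
    unfold margAt
    rw [Finset.sum_mul]
    refine Finset.sum_congr rfl fun w _ => ?_
    have hiff : (∀ i ∈ C, w i = emb C z b i) ↔ (fun i : {i // i ∈ C} => w i.1) = b := by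
      constructor
      · intro h
        funext i
        rw [h i.1 i.2, emb_mem z b i.2]
      · intro h i hi
        rw [emb_mem z b hi, ← h]
    by_cases hc : (fun i : {i // i ∈ C} => w i.1) = b
    · rw [if_pos hc, if_pos (hiff.2 hc)]
      congr 1
      refine hf _ _ fun i hi => ?_
      rw [emb_mem z b hi, ← hc]
    · rw [if_neg hc, if_neg (fun hh => hc (hiff.1 hh)), zero_mul]
  rw [Finset.sum_congr rfl fun b _ => this b, Finset.sum_comm]
  refine Finset.sum_congr rfl fun w _ => ?_
  rw [Finset.sum_ite_eq Finset.univ]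
  simp

lemma expect_eq {p₁ p₂ : (Fin K → Bool) → ℝ} {C : Finset (Fin K)}
    (h : ∀ v, margAt p₁ C v = margAt p₂ C v) (f : (Fin K → Bool) → ℝ)
    (hf : ∀ v w, (∀ i ∈ C, v i = w i) → f v = f w) :
    ∑ v, p₁ v * f v = ∑ v, p₂ v * f v := by
  rw [sum_mul_dependsOn p₁ C f hf, sum_mul_dependsOn p₂ C f hf]
  exact Finset.sum_congr rfl fun b _ => by rw [h]

lemma marg_subset_eq {p₁ p₂ : (Fin K → Bool) → ℝ} {S C : Finset (Fin K)}
    (h : ∀ v, margAt p₁ C v = margAt p₂ C v) (hSC : S ⊆ C) (v : Fin K → Bool) :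
    margAt p₁ S v = margAt p₂ S v := by
  have hid : C \ (C \ S) = S := by
    rw [Finset.sdiff_sdiff_self_left]
    exact Finset.inter_eq_right.2 hSC
  rw [← hid, ← sum_emb_margAt p₁ Finset.sdiff_subset v, ← sum_emb_margAt p₂ Finset.sdiff_subset v]
  exact Finset.sum_congr rfl fun b _ => h _

end Expect

section LogW

variable {K : ℕ} (q : (Fin K → Bool) → ℝ) (𝒢 : Finset (Finset (Fin K)))
  (G : SimpleGraph {C // C ∈ 𝒢})

lemma jtDist_pos (hpos : ∀ v, 0 < q v) (v : Fin K → Bool) : 0 < jtDist q 𝒢 G v := by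
  unfold jtDist
  apply div_pos
  · exact Finset.prod_pos fun C _ => margAt_pos hpos _ _
  · refine Finset.prod_pos fun e _ => ?_
    induction e using Sym2.ind with
    | _ X Y => rw [Sym2.lift_mk]; exact margAt_pos hpos _ _

/-- The pointwise separator log-marginal, as a function on `Sym2`. -/
noncomputable def sepLog : Sym2 {C // C ∈ 𝒢} → (Fin K → Bool) → ℝ :=
  Sym2.lift ⟨fun X Y => fun v => Real.log (margAt q (X.1 ∩ Y.1) v),
    fun X Y => congrArg (fun S => fun v => Real.log (margAt q S v)) (Finset.inter_comm _ _)⟩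

lemma log_jtDist (hpos : ∀ v, 0 < q v) (v : Fin K → Bool) :
    Real.log (jtDist q 𝒢 G v) = (∑ C : {C // C ∈ 𝒢}, Real.log (margAt q C.1 v)) -
      ∑ e ∈ G.edgeFinset, sepLog q 𝒢 e v := by
  unfold jtDist
  have hden : ∀ e ∈ G.edgeFinset,
      Sym2.lift ⟨fun X Y => margAt q (X.1 ∩ Y.1) v,
        fun X Y => congrArg (fun S => margAt q S v) (Finset.inter_comm _ _)⟩ e ≠ 0 := by
    intro e _
    induction e using Sym2.ind with
    | _ X Y => rw [Sym2.lift_mk]; exact (margAt_pos hpos _ _).ne'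
  rw [Real.log_div
    (Finset.prod_ne_zero_iff.2 fun C _ => (margAt_pos hpos _ _).ne')
    (Finset.prod_ne_zero_iff.2 hden),
    Real.log_prod (fun C _ => (margAt_pos hpos _ _).ne'),
    Real.log_prod hden]
  congr 1
  refine Finset.sum_congr rfl fun e _ => ?_
  induction e using Sym2.ind with
  | _ X Y => rw [Sym2.lift_mk]; rfl

lemma sum_mul_logW_eq (hpos : ∀ v, 0 < q v) (p p' : (Fin K → Bool) → ℝ)
    (hm : ∀ (C₀ : {C // C ∈ 𝒢}) (v : Fin K → Bool), margAt p C₀.1 v = margAt p' C₀.1 v) :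
    ∑ v, p v * Real.log (jtDist q 𝒢 G v) = ∑ v, p' v * Real.log (jtDist q 𝒢 G v) := by
  have expand : ∀ pp : (Fin K → Bool) → ℝ,
      ∑ v, pp v * Real.log (jtDist q 𝒢 G v) =
        (∑ C : {C // C ∈ 𝒢}, ∑ v, pp v * Real.log (margAt q C.1 v)) -
          ∑ e ∈ G.edgeFinset, ∑ v, pp v * sepLog q 𝒢 e v := by
    intro pp
    rw [Finset.sum_congr rfl fun v _ => by rw [log_jtDist q 𝒢 G hpos v, mul_sub]]
    rw [Finset.sum_sub_distrib]
    congr 1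
    · simp_rw [Finset.mul_sum]
      rw [Finset.sum_comm]
    · simp_rw [Finset.mul_sum]
      rw [Finset.sum_comm]
  rw [expand p, expand p']
  congr 1
  · refine Finset.sum_congr rfl fun C _ => ?_
    refine expect_eq (hm C) _ fun v w h => ?_
    rw [margAt_congr q h]
  · refine Finset.sum_congr rfl fun e _ => ?_
    induction e using Sym2.ind with
    | _ X Y =>
      have hXY : ∀ v, sepLog q 𝒢 s(X, Y) v = Real.log (margAt q (X.1 ∩ Y.1) v) := by
        intro v; unfold sepLog; rw [Sym2.lift_mk]
      simp_rw [hXY]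
      refine expect_eq (C := X.1 ∩ Y.1)
        (marg_subset_eq (hm X) Finset.inter_subset_left) _ fun v w h => ?_
      rw [margAt_congr q h]

end LogW

end JT

/-- The junction-tree distribution uniquely maximizes entropy among all
distributions with the prescribed clique marginals. -/
theorem jtDist_maxent_unique {K : ℕ} (q : (Fin K → Bool) → ℝ)
    (hq : IsDistribution q) (hpos : ∀ v, 0 < q v)
    (𝒢 : Finset (Finset (Fin K))) (hcov : Covers 𝒢)
    (G : SimpleGraph {C // C ∈ 𝒢}) (hG : IsJunctionTree 𝒢 G) :
    (IsDistribution (jtDist q 𝒢 G) ∧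
      ∀ C : {C // C ∈ 𝒢}, ∀ v, margAt (jtDist q 𝒢 G) C.1 v = margAt q C.1 v) ∧
    ∀ p : (Fin K → Bool) → ℝ, IsDistribution p →
      (∀ C : {C // C ∈ 𝒢}, ∀ v, margAt p C.1 v = margAt q C.1 v) →
      entDist p ≤ entDist (jtDist q 𝒢 G) ∧
        (entDist p = entDist (jtDist q 𝒢 G) → p = jtDist q 𝒢 G) := by
  classical
  obtain ⟨keyA, keyB⟩ := JT.key q hq.2 hpos 𝒢.card 𝒢 G rfl hG
  have hUuniv : 𝒢.sup id = Finset.univ := by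
    ext a
    simp only [Finset.mem_univ, iff_true, Finset.mem_sup]
    obtain ⟨X, hX, haX⟩ := hcov a
    exact ⟨X, hX, haX⟩
  rw [hUuniv] at keyA keyB
  have hWpos : ∀ v, 0 < jtDist q 𝒢 G v := fun v => JT.jtDist_pos q 𝒢 G hpos v
  have hsumW : ∑ v, jtDist q 𝒢 G v = 1 := by
    rw [← keyA (fun _ => false)]
    refine (Fintype.sum_bijective (fun b => JT.emb Finset.univ (fun _ => false) b)
      ⟨?_, ?_⟩ _ _ (fun b => rfl)).symm
    · intro b1 b2 hb
      funext i
      have h2 : JT.emb Finset.univ (fun _ : Fin K => false) b1 i.1 =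
          JT.emb Finset.univ (fun _ : Fin K => false) b2 i.1 := congrFun hb i.1
      rwa [JT.emb_mem _ _ (Finset.mem_univ i.1), JT.emb_mem _ _ (Finset.mem_univ i.1)] at h2
    · intro w
      refine ⟨fun i => w i.1, funext fun i => ?_⟩
      show JT.emb Finset.univ (fun _ : Fin K => false) (fun i => w i.1) i = w i
      rw [JT.emb_mem _ _ (Finset.mem_univ i)]
  have hmargW : ∀ (C₀ : {C // C ∈ 𝒢}) (v : Fin K → Bool),
      margAt (jtDist q 𝒢 G) C₀.1 v = margAt q C₀.1 v := by
    intro C₀ v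
    rw [JT.margAt_eq_sum (jtDist q 𝒢 G) C₀.1 v]
    exact keyB C₀ v
  have hWd : IsDistribution (jtDist q 𝒢 G) := ⟨fun v => (hWpos v).le, hsumW⟩
  refine ⟨⟨hWd, hmargW⟩, ?_⟩
  intro p hp hpm
  have hm : ∀ (C₀ : {C // C ∈ 𝒢}) (v : Fin K → Bool),
      margAt p C₀.1 v = margAt (jtDist q 𝒢 G) C₀.1 v := fun C₀ v => by
    rw [hpm C₀ v, hmargW C₀ v]
  exact JT.gibbs p (jtDist q 𝒢 G) hp hWd hWpos
    (JT.sum_mul_logW_eq q 𝒢 G hpos p (jtDist q 𝒢 G) hm)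
end

section
/- A downward closed family G of itemsets is decomposable if and only if the family of its maximal sets is decomposable. Moreover, the junction-tree distributions defined by a junction tree over the maximal sets and by one over the whole family G coincide. -/
open scoped Classical

noncomputable def maxSets {K : ℕ} (𝒢 : Finset (Finset (Fin K))) : Finset (Finset (Fin K)) :=
  𝒢.filter (fun X => ∀ Y ∈ 𝒢, X ⊆ Y → X = Y)



section GraphAux
variable {V : Type*}

lemma acyclic_of_le {G H : SimpleGraph V} (hle : G ≤ H) (h : H.IsAcyclic) : G.IsAcyclic :=
  fun _ c hc => h (c.mapLe hle) (hc.mapLe hle)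

lemma walk_edges_in {G H : SimpleGraph V} {a b u v : V} {c : G.Walk u v}
    (hG : G ≤ H ⊔ SimpleGraph.fromEdgeSet {s(a,b)})
    (he : s(a,b) ∉ c.edges) : ∀ e ∈ c.edges, e ∈ H.edgeSet := by
  intro e hec
  have : e ∈ G.edgeSet := c.edges_subset_edgeSet hec
  have h2 : e ∈ (H ⊔ SimpleGraph.fromEdgeSet {s(a,b)}).edgeSet := by
    exact (SimpleGraph.edgeSet_subset_edgeSet.2 hG) this
  rw [SimpleGraph.edgeSet_sup] at h2
  rcases h2 with h2 | h2
  · exact h2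
  · rw [SimpleGraph.edgeSet_fromEdgeSet] at h2
    exfalso; apply he
    have : e = s(a,b) := by simpa using h2.1
    rwa [this] at hec

lemma acyclic_sup_edge {G : SimpleGraph V} {a b : V} (hG : G.IsAcyclic) (hab : a ≠ b)
    (hreach : ¬ G.Reachable a b) :
    (G ⊔ SimpleGraph.fromEdgeSet {s(a,b)}).IsAcyclic := by
  set H := G ⊔ SimpleGraph.fromEdgeSet {s(a,b)} with hH
  intro u c hc
  by_cases he : s(a,b) ∈ c.edges
  · have ha : a ∈ c.support := c.fst_mem_support_of_mem_edges he
    set c' := c.rotate a ha with hc'def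
    have hc' : c'.IsCycle := hc.rotate ha
    have he' : s(a,b) ∈ c'.edges := by
      have := c.rotate_edges a ha
      exact (this.mem_iff).2 he
    have hb : b ∈ c'.support := c'.snd_mem_support_of_mem_edges he'
    set p₁ := c'.takeUntil b hb with hp₁
    set p₂ := c'.dropUntil b hb with hp₂
    have hspec : p₁.append p₂ = c' := c'.take_spec hb
    have hedges : c'.edges = p₁.edges ++ p₂.edges := by
      rw [← hspec, SimpleGraph.Walk.edges_append]
    have hnodup : c'.edges.Nodup := hc'.edges_nodup
    rw [hedges] at hnodup he'
    have hdisj := List.disjoint_of_nodup_append hnodup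
    rcases List.mem_append.1 he' with h1 | h2
    · -- s(a,b) ∈ p₁.edges, so p₂ : b → a avoids it
      have hne : s(a,b) ∉ p₂.edges := fun hmem => hdisj h1 hmem
      have hsub : ∀ e ∈ p₂.edges, e ∈ G.edgeSet := walk_edges_in le_rfl hne
      exact hreach ((p₂.transfer G hsub).reverse.reachable)
    · have hne : s(a,b) ∉ p₁.edges := fun hmem => hdisj hmem h2
      have hsub : ∀ e ∈ p₁.edges, e ∈ G.edgeSet := walk_edges_in le_rfl hne
      exact hreach (p₁.transfer G hsub).reachable
  · have hsub : ∀ e ∈ c.edges, e ∈ G.edgeSet := walk_edges_in le_rfl he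
    exact hG (c.transfer G hsub) (hc.transfer hsub)

lemma exists_two_neighbors {G : SimpleGraph V} {u v x : V} (p : G.Walk u v) (hp : p.IsPath)
    (hx : x ∈ p.support) (hxu : x ≠ u) (hxv : x ≠ v) :
    ∃ y z, y ≠ z ∧ G.Adj x y ∧ G.Adj x z := by
  set r := p.takeUntil x hx with hr
  set q := p.dropUntil x hx with hq
  have hspec : r.append q = p := p.take_spec hx
  have hqn : ¬ q.Nil := SimpleGraph.Walk.not_nil_of_ne hxv
  obtain ⟨z, hz, q', hq'⟩ := SimpleGraph.Walk.not_nil_iff.1 hqn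
  have hrn : ¬ r.reverse.Nil := SimpleGraph.Walk.not_nil_of_ne hxu
  obtain ⟨y, hy, r', hr'⟩ := SimpleGraph.Walk.not_nil_iff.1 hrn
  refine ⟨y, z, ?_, hy, hz⟩
  have hedges : p.edges = r.edges ++ q.edges := by
    rw [← hspec, SimpleGraph.Walk.edges_append]
  have hnodup : p.edges.Nodup := hp.isTrail.edges_nodup
  rw [hedges] at hnodup
  have hdisj := List.disjoint_of_nodup_append hnodup
  have hyr : s(x,y) ∈ r.edges := by
    have : s(x,y) ∈ r.reverse.edges := by rw [hr']; simp
    simpa using this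
  have hzq : s(x,z) ∈ q.edges := by rw [hq']; simp
  intro hyz
  subst hyz
  exact hdisj hyr hzq

lemma supports_of_acyclic_walk {G : SimpleGraph V} (hG : G.IsAcyclic) {u v : V}
    (w : G.Walk u v) {Pr : V → Prop} (hw : ∀ z ∈ w.support, Pr z)
    {p : G.Walk u v} (hp : p.IsPath) : ∀ z ∈ p.support, Pr z := by
  have hpq : (⟨p, hp⟩ : G.Path u v) = w.toPath := hG.path_unique _ _
  intro z hz
  have : z ∈ w.bypass.support := by
    have : p = w.bypass := congrArg Subtype.val hpq
    rwa [← this]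
  exact hw z (w.support_bypass_subset this)

end GraphAux


section Pullback
variable {V : Type*}

def comapIncl (H : SimpleGraph V) (P : V → Prop) :
    (H.comap (Subtype.val : Subtype P → V)) →g H := ⟨Subtype.val, fun h => h⟩

@[simp] lemma comapIncl_apply {H : SimpleGraph V} {P : V → Prop} (z : Subtype P) :
    comapIncl H P z = z.1 := rfl

lemma pullback_walk {H : SimpleGraph V} {P : V → Prop} :
    ∀ {b₁ b₂ : V} (c : H.Walk b₁ b₂), (∀ z ∈ c.support, P z) →
    ∀ (u v : Subtype P) (hu : u.1 = b₁) (hv : v.1 = b₂),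
    ∃ w : (H.comap (Subtype.val : Subtype P → V)).Walk u v,
      w.map (comapIncl H P) = c.copy hu.symm hv.symm := by
  intro b₁ b₂ c
  induction c with
  | nil =>
    intro hs u v hu hv
    subst hu
    have : v = u := Subtype.ext (hv.trans rfl)
    subst this
    exact ⟨SimpleGraph.Walk.nil, by simp⟩
  | @cons x y z hxy q ih =>
    intro hs u v hu hv
    have hyP : P y := hs y (by simp)
    set m : Subtype P := ⟨y, hyP⟩ with hm
    have hadj : (H.comap (Subtype.val : Subtype P → V)).Adj u m := by
      show H.Adj u.1 m.1
      rw [hu]; exact hxy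
    obtain ⟨w', hw'⟩ := ih (fun z hz => hs z (by simp [hz])) m v rfl hv
    refine ⟨SimpleGraph.Walk.cons hadj w', ?_⟩
    subst hu; subst hv
    simp only [SimpleGraph.Walk.copy_rfl_rfl] at hw' ⊢
    rw [SimpleGraph.Walk.map_cons, hw']
    rfl

lemma walk_support_mem {H : SimpleGraph V} {P : V → Prop}
    (hedge : ∀ x y, H.Adj x y → P x ∧ P y) :
    ∀ {x y : V} (w : H.Walk x y), P x → ∀ z ∈ w.support, P z := by
  intro x y w
  induction w with
  | nil => intro hx z hz; simp at hz; rwa [hz]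
  | cons h q ih =>
    intro hx z hz
    rw [SimpleGraph.Walk.support_cons] at hz
    rcases List.mem_cons.1 hz with rfl | hz
    · exact hx
    · exact ih (hedge _ _ h).2 z hz

end Pullback

section JTPrime
variable {K : ℕ}

def JT' (ℱ : Finset (Finset (Fin K))) (H : SimpleGraph (Finset (Fin K))) : Prop :=
  H.IsAcyclic ∧
  (∀ X Y, H.Adj X Y → X ∈ ℱ ∧ Y ∈ ℱ ∧ (X ∩ Y).Nonempty) ∧
  (∀ X ∈ ℱ, ∀ Y ∈ ℱ, ∀ a : Fin K, a ∈ X → a ∈ Y → H.Reachable X Y) ∧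
  (∀ (X Y : Finset (Fin K)) (a : Fin K), a ∈ X → a ∈ Y →
    ∀ w : H.Walk X Y, w.IsPath → ∀ Z ∈ w.support, a ∈ Z)

lemma jt'_of_jt {ℱ : Finset (Finset (Fin K))} {G : SimpleGraph {C // C ∈ ℱ}}
    (hG : IsJunctionTree ℱ G) :
    JT' ℱ (G.map (⟨Subtype.val, Subtype.val_injective⟩ : {C // C ∈ ℱ} ↪ Finset (Fin K))) := by
  classical
  obtain ⟨hac, hedge, hreach, hrip⟩ := hG
  set f : {C // C ∈ ℱ} ↪ Finset (Fin K) := ⟨Subtype.val, Subtype.val_injective⟩ with hf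
  set H := G.map f with hH
  have hHedge : ∀ x y, H.Adj x y → x ∈ ℱ ∧ y ∈ ℱ := by
    intro x y ⟨_, a, b, _, ha, hb⟩
    exact ⟨ha ▸ a.2, hb ▸ b.2⟩
  have hcomap : H.comap (Subtype.val : {C // C ∈ ℱ} → Finset (Fin K)) = G := by
    ext a b
    constructor
    · rintro ⟨-, a', b', h, ha, hb⟩
      rwa [Subtype.val_injective ha, Subtype.val_injective hb] at h
    · intro h; exact ⟨fun he => h.ne (Subtype.ext he), a, b, h, rfl, rfl⟩
  refine ⟨?_, ?_, ?_, ?_⟩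
  · -- acyclic
    intro u c hc
    have hne : ¬ c.Nil := hc.not_nil
    obtain ⟨y, hadj, q, rfl⟩ := SimpleGraph.Walk.not_nil_iff.1 hne
    have huF : u ∈ ℱ := (hHedge _ _ hadj).1
    have hsup : ∀ z ∈ (SimpleGraph.Walk.cons hadj q).support, z ∈ ℱ :=
      walk_support_mem hHedge _ huF
    obtain ⟨w, hw⟩ := pullback_walk _ hsup ⟨u, huF⟩ ⟨u, huF⟩ rfl rfl
    have hwc : w.IsCycle := by
      have : (w.map (comapIncl H _)).IsCycle := by
        rw [hw]; simpa using hc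
      exact (SimpleGraph.Walk.map_isCycle_iff_of_injective Subtype.val_injective).1 this
    have hacyc : (H.comap (Subtype.val : {C // C ∈ ℱ} → Finset (Fin K))).IsAcyclic := by
      rw [hcomap]; exact hac
    exact hacyc w hwc
  · rintro X Y ⟨-, a, b, h, rfl, rfl⟩
    exact ⟨a.2, b.2, hedge _ _ h⟩
  · intro X hX Y hY a haX haY
    exact (hreach ⟨X, hX⟩ ⟨Y, hY⟩ a haX haY).map
      (⟨Subtype.val, fun {a b} hab => ⟨fun he => hab.ne (Subtype.ext he), a, b, hab, rfl, rfl⟩⟩ : G →g H)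
  · intro X Y a haX haY p hp Z hZ
    cases p with
    | nil => simp at hZ; rwa [hZ]
    | cons hadj q =>
      have hXF : X ∈ ℱ := (hHedge _ _ hadj).1
      have hsup : ∀ z ∈ (SimpleGraph.Walk.cons hadj q).support, z ∈ ℱ :=
        walk_support_mem hHedge _ hXF
      have hYF : Y ∈ ℱ := hsup _ (SimpleGraph.Walk.end_mem_support _)
      obtain ⟨w, hw⟩ := pullback_walk _ hsup ⟨X, hXF⟩ ⟨Y, hYF⟩ rfl rfl
      have hwmap : w.map (comapIncl H _) = SimpleGraph.Walk.cons hadj q := by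
        rw [hw]; simp
      have hwp : w.IsPath := by
        apply SimpleGraph.Walk.IsPath.of_map (f := comapIncl H _)
        rw [hwmap]; exact hp
      have key : ∀ (w : (H.comap (Subtype.val : {C // C ∈ ℱ} → Finset (Fin K))).Walk
          ⟨X, hXF⟩ ⟨Y, hYF⟩), w.IsPath → ∀ z ∈ w.support, a ∈ z.1 := by
        rw [hcomap]
        exact fun w hw => hrip ⟨X, hXF⟩ ⟨Y, hYF⟩ a haX haY w hw
      have hripw := key w hwp
      have hZsup : Z ∈ (w.map (comapIncl H _)).support := by rw [hwmap]; exact hZ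
      rw [SimpleGraph.Walk.support_map] at hZsup
      obtain ⟨z, hz, hzeq⟩ := List.mem_map.1 hZsup
      have : a ∈ z.1 := hripw z hz
      simpa [← hzeq] using this

lemma jt_of_jt' {ℱ : Finset (Finset (Fin K))} {H : SimpleGraph (Finset (Fin K))}
    (hH : JT' ℱ H) :
    IsJunctionTree ℱ (H.comap (Subtype.val : {C // C ∈ ℱ} → Finset (Fin K))) := by
  obtain ⟨hac, hedge, hreach, hrip⟩ := hH
  refine ⟨?_, ?_, ?_, ?_⟩
  · intro u c hc
    have := hc.map (f := comapIncl H (· ∈ ℱ)) Subtype.val_injective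
    exact hac _ this
  · intro X Y h
    exact (hedge X.1 Y.1 h).2.2
  · intro X Y a haX haY
    have := hreach X.1 X.2 Y.1 Y.2 a haX haY
    obtain ⟨c⟩ := this
    by_cases hXY : X = Y
    · subst hXY; exact SimpleGraph.Reachable.refl _
    · have hpath := c.toPath
      set p := c.bypass with hp
      have hpp : p.IsPath := c.bypass_isPath
      have hnil : ¬ p.Nil := SimpleGraph.Walk.not_nil_of_ne (fun h => hXY (Subtype.ext h))
      obtain ⟨y, hadj, q, hq⟩ := SimpleGraph.Walk.not_nil_iff.1 hnil
      have hsup : ∀ z ∈ p.support, z ∈ ℱ := by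
        rw [hq]
        exact walk_support_mem (fun x y h => ⟨(hedge _ _ h).1, (hedge _ _ h).2.1⟩) _
          (hedge _ _ hadj).1
      obtain ⟨w, -⟩ := pullback_walk p hsup X Y rfl rfl
      exact w.reachable
  · intro X Y a haX haY w hw Z hZ
    have hmap : (w.map (comapIncl H (· ∈ ℱ))).IsPath :=
      SimpleGraph.Walk.map_isPath_of_injective Subtype.val_injective hw
    have := hrip X.1 Y.1 a haX haY (w.map (comapIncl H (· ∈ ℱ))) hmap Z.1
      (by have h2 : (comapIncl H (· ∈ ℱ)) Z ∈ (w.map (comapIncl H (· ∈ ℱ))).support := (by rw [SimpleGraph.Walk.support_map]; exact List.mem_map_of_mem hZ); exact h2)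
    exact this

lemma support_mapLe {V : Type*} {G H : SimpleGraph V} (h : G ≤ H) {u v : V} (p : G.Walk u v) :
    (p.mapLe h).support = p.support := by
  rw [SimpleGraph.Walk.mapLe, SimpleGraph.Walk.support_map]
  have : ⇑(SimpleGraph.Hom.ofLE h) = id := rfl
  rw [this, List.map_id]

section JTPrime
variable {K : ℕ}
lemma jt'_insert {ℱ : Finset (Finset (Fin K))} {H : SimpleGraph (Finset (Fin K))}
    (h : JT' ℱ H) {X M : Finset (Fin K)} (hXF : X ∉ ℱ) (hM : M ∈ ℱ) (hXM : X ⊆ M) :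
    ∃ H', JT' (insert X ℱ) H' := by
  obtain ⟨hac, hedge, hreach, hrip⟩ := h
  by_cases hXe : X = ∅
  · -- X empty: same graph works
    refine ⟨H, hac, ?_, ?_, ?_⟩
    · intro A B hAB
      obtain ⟨h1, h2, h3⟩ := hedge A B hAB
      exact ⟨Finset.mem_insert_of_mem h1, Finset.mem_insert_of_mem h2, h3⟩
    · intro A hA B hB a haA haB
      rcases Finset.mem_insert.1 hA with rfl | hA
      · exact absurd haA (by simp [hXe])
      rcases Finset.mem_insert.1 hB with rfl | hB
      · exact absurd haB (by simp [hXe])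
      exact hreach A hA B hB a haA haB
    · exact hrip
  · have hXne : X.Nonempty := Finset.nonempty_iff_ne_empty.2 hXe
    have hXM' : X ≠ M := fun h => hXF (h ▸ hM)
    set H' := H ⊔ SimpleGraph.fromEdgeSet {s(X,M)} with hH'
    have hiso : ∀ z, ¬ H.Adj X z := fun z hz => hXF (hedge _ _ hz).1
    have hnr : ¬ H.Reachable X M := by
      rintro ⟨c⟩
      have : ¬ c.Nil := SimpleGraph.Walk.not_nil_of_ne hXM'
      obtain ⟨y, hadj, q, -⟩ := SimpleGraph.Walk.not_nil_iff.1 this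
      exact hiso y hadj
    have hac' : H'.IsAcyclic := acyclic_sup_edge hac hXM' hnr
    have hadjXM : H'.Adj X M := by
      rw [hH', SimpleGraph.sup_adj, SimpleGraph.fromEdgeSet_adj]
      exact Or.inr ⟨rfl, hXM'⟩
    have hedge' : ∀ A B, H'.Adj A B → A ∈ insert X ℱ ∧ B ∈ insert X ℱ ∧ (A ∩ B).Nonempty := by
      intro A B hAB
      rw [hH', SimpleGraph.sup_adj, SimpleGraph.fromEdgeSet_adj] at hAB
      rcases hAB with hAB | ⟨he, hne⟩
      · obtain ⟨h1, h2, h3⟩ := hedge A B hAB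
        exact ⟨Finset.mem_insert_of_mem h1, Finset.mem_insert_of_mem h2, h3⟩
      · rw [Set.mem_singleton_iff, Sym2.eq_iff] at he
        rcases he with ⟨rfl, rfl⟩ | ⟨rfl, rfl⟩
        · exact ⟨Finset.mem_insert_self _ _, Finset.mem_insert_of_mem hM,
            by rwa [Finset.inter_eq_left.2 hXM]⟩
        · exact ⟨Finset.mem_insert_of_mem hM, Finset.mem_insert_self _ _,
            by rw [Finset.inter_comm]; rwa [Finset.inter_eq_left.2 hXM]⟩
    -- good walks
    have hgoodF : ∀ A ∈ ℱ, ∀ B ∈ ℱ, ∀ a : Fin K, a ∈ A → a ∈ B →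
        ∃ w : H'.Walk A B, ∀ z ∈ w.support, a ∈ z := by
      intro A hA B hB a haA haB
      obtain ⟨c⟩ := hreach A hA B hB a haA haB
      refine ⟨c.bypass.mapLe le_sup_left, ?_⟩
      intro z hz
      rw [support_mapLe] at hz
      exact hrip A B a haA haB c.bypass c.bypass_isPath z hz
    have hgoodX : ∀ B ∈ ℱ, ∀ a : Fin K, a ∈ X → a ∈ B →
        ∃ w : H'.Walk X B, ∀ z ∈ w.support, a ∈ z := by
      intro B hB a haX haB
      obtain ⟨w0, hw0⟩ := hgoodF M hM B hB a (hXM haX) haB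
      refine ⟨SimpleGraph.Walk.cons hadjXM w0, ?_⟩
      intro z hz
      rw [SimpleGraph.Walk.support_cons] at hz
      rcases List.mem_cons.1 hz with rfl | hz
      · exact haX
      · exact hw0 z hz
    refine ⟨H', hac', hedge', ?_, ?_⟩
    · intro A hA B hB a haA haB
      by_cases hAX : A = X
      · subst hAX
        by_cases hBX : B = A
        · subst hBX; exact SimpleGraph.Reachable.refl _
        · have hB' : B ∈ ℱ := (Finset.mem_insert.1 hB).resolve_left hBX
          obtain ⟨w, -⟩ := hgoodX B hB' a haA haB; exact w.reachable
      · have hA' : A ∈ ℱ := (Finset.mem_insert.1 hA).resolve_left hAX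
        by_cases hBX : B = X
        · subst hBX
          obtain ⟨w, -⟩ := hgoodX A hA' a haB haA; exact w.reverse.reachable
        · have hB' : B ∈ ℱ := (Finset.mem_insert.1 hB).resolve_left hBX
          exact (hreach A hA' B hB' a haA haB).mono le_sup_left
    · intro A B a haA haB p hp Z hZ
      cases p with
      | nil => rw [SimpleGraph.Walk.support_nil] at hZ; simp at hZ; rwa [hZ]
      | cons hadj q =>
        obtain ⟨hA, -, -⟩ := hedge' _ _ hadj
        have hBmem : B ∈ insert X ℱ := by
          have hsup : ∀ z ∈ (SimpleGraph.Walk.cons hadj q).support, z ∈ insert X ℱ := by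
            intro z hz
            rw [SimpleGraph.Walk.support_cons] at hz
            rcases List.mem_cons.1 hz with rfl | hz
            · exact hA
            · exact walk_support_mem
                (fun x y hxy => ⟨(hedge' _ _ hxy).1, (hedge' _ _ hxy).2.1⟩) q
                (hedge' _ _ hadj).2.1 z hz
          exact hsup _ (SimpleGraph.Walk.end_mem_support _)
        -- produce good walk A → B
        have hgood : ∃ w : H'.Walk A B, ∀ z ∈ w.support, a ∈ z := by
          by_cases hAX : A = X
          · subst hAX
            by_cases hBX : B = A
            · subst hBX; exact ⟨SimpleGraph.Walk.nil, by intro z hz; simp at hz; rwa [hz]⟩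
            · have hB' : B ∈ ℱ := (Finset.mem_insert.1 hBmem).resolve_left hBX
              exact hgoodX B hB' a haA haB
          · have hA' : A ∈ ℱ := (Finset.mem_insert.1 hA).resolve_left hAX
            by_cases hBX : B = X
            · subst hBX
              obtain ⟨w, hw⟩ := hgoodX A hA' a haB haA
              exact ⟨w.reverse, by
                intro z hz; rw [SimpleGraph.Walk.support_reverse] at hz
                exact hw z (List.mem_reverse.1 hz)⟩
            · have hB' : B ∈ ℱ := (Finset.mem_insert.1 hBmem).resolve_left hBX
              exact hgoodF A hA' B hB' a haA haB
        obtain ⟨w, hw⟩ := hgood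
        exact supports_of_acyclic_walk hac' w hw hp Z hZ
end JTPrime

section Erase
variable {K : ℕ} {ℱ : Finset (Finset (Fin K))} {H : SimpleGraph (Finset (Fin K))}
  {X : Finset (Fin K)}

lemma jt'_erase_isolated (hJT : JT' ℱ H) (hiso : ∀ z, ¬ H.Adj X z) :
    JT' (ℱ.erase X) H := by
  obtain ⟨hac, hedge, hreach, hrip⟩ := hJT
  refine ⟨hac, ?_, ?_, hrip⟩
  · intro A B hAB
    obtain ⟨h1, h2, h3⟩ := hedge A B hAB
    have hAX : A ≠ X := fun h => hiso B (h ▸ hAB)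
    have hBX : B ≠ X := fun h => hiso A (h ▸ hAB.symm)
    exact ⟨Finset.mem_erase.2 ⟨hAX, h1⟩, Finset.mem_erase.2 ⟨hBX, h2⟩, h3⟩
  · intro A hA B hB a haA haB
    exact hreach A (Finset.mem_of_mem_erase hA) B (Finset.mem_of_mem_erase hB) a haA haB

lemma jt'_erase_leaf (hJT : JT' ℱ H) {N : Finset (Fin K)}
    (hadjXN : H.Adj X N) (honly : ∀ z, H.Adj X z → z = N) :
    JT' (ℱ.erase X) (H.deleteEdges {s(X,N)}) := by
  obtain ⟨hac, hedge, hreach, hrip⟩ := hJT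
  have hdel_le := H.deleteEdges_le {s(X,N)}
  refine ⟨acyclic_of_le hdel_le hac, ?_, ?_, ?_⟩
  · intro A B hAB
    rw [SimpleGraph.deleteEdges_adj] at hAB
    obtain ⟨hAB, hne⟩ := hAB
    obtain ⟨h1, h2, h3⟩ := hedge A B hAB
    have hAX : A ≠ X := by
      intro h
      apply hne
      have hBN : B = N := honly B (h ▸ hAB)
      rw [h, hBN]
      exact rfl
    have hBX : B ≠ X := by
      intro h
      apply hne
      have hAN : A = N := honly A (h ▸ hAB.symm)
      rw [h, hAN, Sym2.eq_swap]
      exact rfl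
    exact ⟨Finset.mem_erase.2 ⟨hAX, h1⟩, Finset.mem_erase.2 ⟨hBX, h2⟩, h3⟩
  · intro A hA B hB a haA haB
    have hAe := Finset.mem_erase.1 hA
    have hBe := Finset.mem_erase.1 hB
    obtain ⟨c⟩ := hreach A hAe.2 B hBe.2 a haA haB
    set p := c.bypass with hp
    have hpp : p.IsPath := c.bypass_isPath
    have hXp : X ∉ p.support := by
      intro hXs
      obtain ⟨y, z, hyz, hy, hz⟩ := exists_two_neighbors p hpp hXs hAe.1.symm hBe.1.symm
      exact hyz ((honly y hy).trans (honly z hz).symm)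
    have hedges : ∀ e ∈ p.edges, e ∉ ({s(X,N)} : Set (Sym2 (Finset (Fin K)))) := by
      intro e he hmem
      rw [Set.mem_singleton_iff] at hmem
      subst hmem
      exact hXp (p.fst_mem_support_of_mem_edges he)
    exact (p.toDeleteEdges _ hedges).reachable
  · intro A B a haA haB w hw Z hZ
    have := hrip A B a haA haB (w.mapLe hdel_le) (hw.mapLe hdel_le) Z
    rw [support_mapLe] at this
    exact this hZ

lemma jt'_swap (hJT : JT' ℱ H) {N A : Finset (Fin K)}
    (hadjXN : H.Adj X N) (hXN : X ⊆ N) (hadjXA : H.Adj X A) (hAN : A ≠ N) :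
    JT' ℱ ((H.deleteEdges {s(X,A)}) ⊔ SimpleGraph.fromEdgeSet {s(A,N)}) := by
  obtain ⟨hac, hedge, hreach, hrip⟩ := hJT
  have hXA : X ≠ A := hadjXA.ne
  have hXNne : X ≠ N := hadjXN.ne
  set Hd := H.deleteEdges {s(X,A)} with hHd
  set H₂ := Hd ⊔ SimpleGraph.fromEdgeSet {s(A,N)} with hH₂
  have hd_le : Hd ≤ H := H.deleteEdges_le _
  have hd_ac : Hd.IsAcyclic := acyclic_of_le hd_le hac
  have hadjNX_d : Hd.Adj N X := by
    rw [hHd, SimpleGraph.deleteEdges_adj]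
    refine ⟨hadjXN.symm, ?_⟩
    rw [Set.mem_singleton_iff, Sym2.eq_iff]
    rintro (⟨h1, h2⟩ | ⟨h1, h2⟩)
    · exact hXNne h1.symm
    · exact hAN h1.symm
  have hnr : ¬ Hd.Reachable A N := by
    intro hr
    have hbr := (SimpleGraph.isAcyclic_iff_forall_edge_isBridge.1 hac) (e := s(X,A))
      (by rwa [SimpleGraph.mem_edgeSet])
    rw [SimpleGraph.isBridge_iff] at hbr
    exact hbr ((hadjNX_d.symm.reachable).trans hr.symm)
  have hac₂ : H₂.IsAcyclic := acyclic_sup_edge hd_ac hAN hnr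
  have hANinter : (A ∩ N).Nonempty := by
    obtain ⟨b, hb⟩ := (hedge _ _ hadjXA).2.2
    rw [Finset.mem_inter] at hb
    exact ⟨b, Finset.mem_inter.2 ⟨hb.2, hXN hb.1⟩⟩
  have hadj₂XN : H₂.Adj X N := Or.inl (by
    rw [hHd, SimpleGraph.deleteEdges_adj]
    refine ⟨hadjXN, ?_⟩
    rw [Set.mem_singleton_iff, Sym2.eq_iff]
    rintro (⟨h1, h2⟩ | ⟨h1, h2⟩)
    · exact hAN h2.symm
    · exact hXA h1)
  have hadj₂NA : H₂.Adj N A := Or.inr (by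
    rw [SimpleGraph.fromEdgeSet_adj]
    exact ⟨by rw [Sym2.eq_swap]; exact rfl, hAN.symm⟩)
  -- rewire: H-walks become H₂-walks
  have rewire : ∀ {u v : Finset (Fin K)} (w : H.Walk u v),
      ∃ w₂ : H₂.Walk u v, ∀ z ∈ w₂.support, z ∈ w.support ∨ (z = N ∧ s(X,A) ∈ w.edges) := by
    intro u v w
    induction w with
    | nil => exact ⟨SimpleGraph.Walk.nil, by intro z hz; simp at hz; simp [hz]⟩
    | @cons x y z hxy q ih =>
      obtain ⟨w₂', hsup⟩ := ih
      by_cases he : s(x,y) = s(X,A)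
      · rw [Sym2.eq_iff] at he
        rcases he with ⟨rfl, rfl⟩ | ⟨rfl, rfl⟩
        · -- x = X, y = A : route X - N - A
          refine ⟨SimpleGraph.Walk.cons hadj₂XN (SimpleGraph.Walk.cons hadj₂NA w₂'), ?_⟩
          intro z' hz'
          rw [SimpleGraph.Walk.support_cons, SimpleGraph.Walk.support_cons] at hz'
          rcases List.mem_cons.1 hz' with rfl | hz'
          · left; simp
          rcases List.mem_cons.1 hz' with rfl | hz'
          · right; exact ⟨rfl, by simp⟩
          · rcases hsup z' hz' with h | ⟨rfl, hmem⟩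
            · left; rw [SimpleGraph.Walk.support_cons]; exact List.mem_cons_of_mem _ h
            · right; exact ⟨rfl, by rw [SimpleGraph.Walk.edges_cons]; exact List.mem_cons_of_mem _ hmem⟩
        · -- x = A, y = X : route A - N - X
          refine ⟨SimpleGraph.Walk.cons hadj₂NA.symm (SimpleGraph.Walk.cons hadj₂XN.symm w₂'), ?_⟩
          intro z' hz'
          rw [SimpleGraph.Walk.support_cons, SimpleGraph.Walk.support_cons] at hz'
          rcases List.mem_cons.1 hz' with rfl | hz'
          · left; simp
          rcases List.mem_cons.1 hz' with rfl | hz'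
          · right; exact ⟨rfl, by simp [Sym2.eq_swap]⟩
          · rcases hsup z' hz' with h | ⟨rfl, hmem⟩
            · left; rw [SimpleGraph.Walk.support_cons]; exact List.mem_cons_of_mem _ h
            · right; exact ⟨rfl, by rw [SimpleGraph.Walk.edges_cons]; exact List.mem_cons_of_mem _ hmem⟩
      · have hadj₂ : H₂.Adj x y := Or.inl (by
          rw [hHd, SimpleGraph.deleteEdges_adj]
          exact ⟨hxy, by rwa [Set.mem_singleton_iff]⟩)
        refine ⟨SimpleGraph.Walk.cons hadj₂ w₂', ?_⟩
        intro z' hz'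
        rw [SimpleGraph.Walk.support_cons] at hz'
        rcases List.mem_cons.1 hz' with rfl | hz'
        · left; simp
        · rcases hsup z' hz' with h | ⟨rfl, hmem⟩
          · left; rw [SimpleGraph.Walk.support_cons]; exact List.mem_cons_of_mem _ h
          · right; exact ⟨rfl, by rw [SimpleGraph.Walk.edges_cons]; exact List.mem_cons_of_mem _ hmem⟩
  have rewireBack : ∀ {u v : Finset (Fin K)} (w₂ : H₂.Walk u v), Nonempty (H.Walk u v) := by
    intro u v w₂
    induction w₂ with
    | nil => exact ⟨SimpleGraph.Walk.nil⟩
    | @cons x y z hxy q ih =>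
      obtain ⟨w'⟩ := ih
      rcases hxy with hxy | hxy
      · exact ⟨SimpleGraph.Walk.cons (hd_le hxy) w'⟩
      · rw [SimpleGraph.fromEdgeSet_adj, Set.mem_singleton_iff, Sym2.eq_iff] at hxy
        rcases hxy.1 with ⟨rfl, rfl⟩ | ⟨rfl, rfl⟩
        · exact ⟨SimpleGraph.Walk.cons hadjXA.symm (SimpleGraph.Walk.cons hadjXN w')⟩
        · exact ⟨SimpleGraph.Walk.cons hadjXN.symm (SimpleGraph.Walk.cons hadjXA w')⟩
  refine ⟨hac₂, ?_, ?_, ?_⟩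
  · intro u v huv
    rcases huv with huv | huv
    · exact hedge u v (hd_le huv)
    · rw [SimpleGraph.fromEdgeSet_adj, Set.mem_singleton_iff, Sym2.eq_iff] at huv
      rcases huv.1 with ⟨rfl, rfl⟩ | ⟨rfl, rfl⟩
      · exact ⟨(hedge _ _ hadjXA).2.1, (hedge _ _ hadjXN).2.1, hANinter⟩
      · exact ⟨(hedge _ _ hadjXN).2.1, (hedge _ _ hadjXA).2.1,
          by rw [Finset.inter_comm]; exact hANinter⟩
  · intro u hu v hv a hau hav
    obtain ⟨c⟩ := hreach u hu v hv a hau hav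
    obtain ⟨w₂, -⟩ := rewire c
    exact w₂.reachable
  · intro u v a hau hav p₂ hp₂ Z hZ
    obtain ⟨w⟩ := rewireBack p₂
    set p₀ := w.bypass with hp₀
    have hp₀p : p₀.IsPath := w.bypass_isPath
    have hrip₀ : ∀ z ∈ p₀.support, a ∈ z := fun z hz => hrip u v a hau hav p₀ hp₀p z hz
    obtain ⟨w₂, hw₂⟩ := rewire p₀
    have hgood : ∀ z ∈ w₂.support, a ∈ z := by
      intro z hz
      rcases hw₂ z hz with h | ⟨rfl, hmem⟩
      · exact hrip₀ z h
      · have hXsup : X ∈ p₀.support := p₀.fst_mem_support_of_mem_edges hmem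
        exact hXN (hrip₀ X hXsup)
    exact supports_of_acyclic_walk hac₂ w₂ hgood hp₂ Z hZ

end Erase

lemma jt'_erase {ℱ : Finset (Finset (Fin K))} {H : SimpleGraph (Finset (Fin K))}
    (hJT : JT' ℱ H) {X Y : Finset (Fin K)} (hX : X ∈ ℱ) (hY : Y ∈ ℱ)
    (hne : X ≠ Y) (hsub : X ⊆ Y) : ∃ H', JT' (ℱ.erase X) H' := by
  suffices h : ∀ (n : ℕ) (H : SimpleGraph (Finset (Fin K))), JT' ℱ H →
      ({e | e ∈ H.edgeSet ∧ X ∈ e}.ncard ≤ n) → ∃ H', JT' (ℱ.erase X) H' from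
    h _ H hJT le_rfl
  intro n
  induction n with
  | zero =>
    intro H hJT hdeg
    refine ⟨H, jt'_erase_isolated hJT ?_⟩
    intro z hz
    have hmem : s(X,z) ∈ {e | e ∈ H.edgeSet ∧ X ∈ e} :=
      ⟨(SimpleGraph.mem_edgeSet H).2 hz, Sym2.mem_mk_left _ _⟩
    have := (Set.ncard_pos (Set.toFinite _)).2 ⟨_, hmem⟩
    omega
  | succ n ih =>
    intro H hJT hdeg
    by_cases hiso : ∀ z, ¬ H.Adj X z
    · exact ⟨H, jt'_erase_isolated hJT hiso⟩
    · push_neg at hiso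
      obtain ⟨Z₀, hZ₀⟩ := hiso
      obtain ⟨b, hb⟩ := (hJT.2.1 _ _ hZ₀).2.2
      have hXne : X.Nonempty := ⟨b, (Finset.mem_inter.1 hb).1⟩
      obtain ⟨a, ha⟩ := hXne
      obtain ⟨c⟩ := hJT.2.2.1 X hX Y hY a ha (hsub ha)
      have hpp : c.bypass.IsPath := c.bypass_isPath
      have hnil : ¬ c.bypass.Nil := SimpleGraph.Walk.not_nil_of_ne hne
      obtain ⟨N, hadjXN, q, hq⟩ := SimpleGraph.Walk.not_nil_iff.1 hnil
      have hXN : X ⊆ N := by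
        intro b' hb'
        exact hJT.2.2.2 X Y b' hb' (hsub hb') c.bypass hpp N (by rw [hq]; simp)
      by_cases hA : ∃ A, H.Adj X A ∧ A ≠ N
      · obtain ⟨A, hadjXA, hAN⟩ := hA
        have hXA : X ≠ A := hadjXA.ne
        have hXNne : X ≠ N := hadjXN.ne
        have hswap := jt'_swap hJT hadjXN hXN hadjXA hAN
        apply ih _ hswap
        have hsubf : {e | e ∈ (H.deleteEdges {s(X,A)} ⊔
            SimpleGraph.fromEdgeSet {s(A,N)}).edgeSet ∧ X ∈ e} ⊆
            {e | e ∈ H.edgeSet ∧ X ∈ e} \ {s(X,A)} := by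
          intro e he
          obtain ⟨hmem, hXe⟩ := he
          rw [SimpleGraph.edgeSet_sup] at hmem
          rcases hmem with hmem | hmem
          · rw [SimpleGraph.edgeSet_deleteEdges] at hmem
            exact ⟨⟨hmem.1, hXe⟩, hmem.2⟩
          · exfalso
            rw [SimpleGraph.edgeSet_fromEdgeSet] at hmem
            have he' : e = s(A,N) := hmem.1
            subst he'
            rw [Sym2.mem_iff] at hXe
            rcases hXe with h | h
            exacts [hXA h, hXNne h]
        have hmemXA : s(X,A) ∈ {e | e ∈ H.edgeSet ∧ X ∈ e} :=
          ⟨(SimpleGraph.mem_edgeSet H).2 hadjXA, Sym2.mem_mk_left _ _⟩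
        have h1 := Set.ncard_le_ncard hsubf (Set.toFinite _)
        have h2 := Set.ncard_diff_singleton_lt_of_mem hmemXA (Set.toFinite _)
        omega
      · push_neg at hA
        exact ⟨_, jt'_erase_leaf hJT hadjXN (fun z hz => hA z hz)⟩

lemma maxSets_subset {𝒢 : Finset (Finset (Fin K))} : maxSets 𝒢 ⊆ 𝒢 :=
  Finset.filter_subset _ _

lemma exists_maximal_superset {𝒢 : Finset (Finset (Fin K))} {X : Finset (Fin K)}
    (hX : X ∈ 𝒢) : ∃ M ∈ maxSets 𝒢, X ⊆ M := by
  obtain ⟨M, hM, hmax⟩ := (𝒢.filter (fun Z => X ⊆ Z)).exists_maximal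
    ⟨X, Finset.mem_filter.2 ⟨hX, le_refl X⟩⟩
  rw [Finset.mem_filter] at hM
  refine ⟨M, Finset.mem_filter.2 ⟨hM.1, ?_⟩, hM.2⟩
  intro Z hZ hMZ
  by_contra hne
  exact hne (le_antisymm hMZ (hmax (Finset.mem_filter.2 ⟨hZ, hM.2.trans hMZ⟩) hMZ))

lemma maxSets_erase {ℱ : Finset (Finset (Fin K))} {X Y : Finset (Fin K)}
    (hX : X ∈ ℱ) (hY : Y ∈ ℱ) (hsub : X ⊆ Y) (hne : X ≠ Y) :
    maxSets (ℱ.erase X) = maxSets ℱ := by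
  ext M
  simp only [maxSets, Finset.mem_filter]
  constructor
  · rintro ⟨hM, hmax⟩
    have hMF : M ∈ ℱ := Finset.mem_of_mem_erase hM
    refine ⟨hMF, ?_⟩
    intro Z hZ hMZ
    by_cases hZX : Z = X
    · subst hZX
      have hYe : Y ∈ ℱ.erase Z := Finset.mem_erase.2 ⟨hne.symm, hY⟩
      have : M = Y := hmax Y hYe (hMZ.trans hsub)
      exact absurd (Finset.Subset.antisymm hsub (this ▸ hMZ)) hne
    · exact hmax Z (Finset.mem_erase.2 ⟨hZX, hZ⟩) hMZ
  · rintro ⟨hM, hmax⟩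
    have hMX : M ≠ X := by
      rintro rfl
      exact hne (hmax Y hY hsub)
    exact ⟨Finset.mem_erase.2 ⟨hMX, hM⟩, fun Z hZ hMZ =>
      hmax Z (Finset.mem_of_mem_erase hZ) hMZ⟩

lemma decomp_maxSets {𝒢 : Finset (Finset (Fin K))} (h : Decomposable 𝒢) :
    Decomposable (maxSets 𝒢) := by
  suffices key : ∀ (m : ℕ) (ℱ : Finset (Finset (Fin K))), ℱ.card ≤ m →
      Decomposable ℱ → Decomposable (maxSets ℱ) from key _ 𝒢 le_rfl h
  intro m
  induction m with
  | zero =>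
    intro ℱ hcard hdec
    have : ℱ = ∅ := Finset.card_eq_zero.1 (Nat.le_zero.1 hcard)
    subst this
    have : maxSets (∅ : Finset (Finset (Fin K))) = ∅ := rfl
    rw [this]
    -- Decomposable ∅ : same as hdec since ∅ = maxSets ∅ ... just reuse
    exact hdec
  | succ m ih =>
    intro ℱ hcard hdec
    by_cases heq : maxSets ℱ = ℱ
    · rw [heq]; exact hdec
    · have hssub : maxSets ℱ ⊂ ℱ := ⟨maxSets_subset, fun h' => heq (Finset.Subset.antisymm maxSets_subset h')⟩
      obtain ⟨X, hXF, hXnm⟩ := Finset.exists_of_ssubset hssub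
      have hXnm' : ¬ (∀ Y ∈ ℱ, X ⊆ Y → X = Y) := by
        intro hmax
        exact hXnm (Finset.mem_filter.2 ⟨hXF, hmax⟩)
      push_neg at hXnm'
      obtain ⟨Y, hY, hXY, hne⟩ := hXnm'
      obtain ⟨G, hG⟩ := hdec
      obtain ⟨H', hH'⟩ := jt'_erase (jt'_of_jt hG) hXF hY hne hXY
      have hdec' : Decomposable (ℱ.erase X) := ⟨_, jt_of_jt' hH'⟩
      have hcard' : (ℱ.erase X).card ≤ m := by
        rw [Finset.card_erase_of_mem hXF]
        omega
      have := ih (ℱ.erase X) hcard' hdec'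
      rwa [maxSets_erase hXF hY hXY hne] at this

lemma decomp_of_maxSets {𝒢 : Finset (Finset (Fin K))} (hdc : ∀ X ∈ 𝒢, ∀ Y ⊆ X, Y ∈ 𝒢)
    (h : Decomposable (maxSets 𝒢)) : Decomposable 𝒢 := by
  suffices key : ∀ (m : ℕ) (ℱ : Finset (Finset (Fin K))), ℱ.card ≤ m →
      maxSets 𝒢 ⊆ ℱ → ℱ ⊆ 𝒢 → Decomposable ℱ from
    key _ 𝒢 le_rfl maxSets_subset le_rfl
  intro m
  induction m with
  | zero =>
    intro ℱ hcard hs1 hs2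
    have : ℱ = ∅ := Finset.card_eq_zero.1 (Nat.le_zero.1 hcard)
    subst this
    have hms : maxSets 𝒢 = ∅ := Finset.subset_empty.1 hs1
    rw [← hms]
    exact h
  | succ m ih =>
    intro ℱ hcard hs1 hs2
    by_cases heq : ℱ = maxSets 𝒢
    · rw [heq]; exact h
    · have hssub : maxSets 𝒢 ⊂ ℱ := ⟨hs1, fun h' => heq (Finset.Subset.antisymm h' hs1)⟩
      obtain ⟨X, hXF, hXnm⟩ := Finset.exists_of_ssubset hssub
      have hdec' : Decomposable (ℱ.erase X) := by
        apply ih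
        · rw [Finset.card_erase_of_mem hXF]; omega
        · intro M hM
          exact Finset.mem_erase.2 ⟨fun hMX => hXnm (hMX ▸ hM), hs1 hM⟩
        · exact (Finset.erase_subset _ _).trans hs2
      obtain ⟨M, hM, hXM⟩ := exists_maximal_superset (hs2 hXF)
      have hMe : M ∈ ℱ.erase X := Finset.mem_erase.2 ⟨fun hMX => hXnm (hMX ▸ hM), hs1 hM⟩
      obtain ⟨G, hG⟩ := hdec'
      obtain ⟨H', hH'⟩ := jt'_insert (jt'_of_jt hG) (Finset.notMem_erase X ℱ) hMe hXM
      rw [Finset.insert_erase hXF] at hH'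
      exact ⟨_, jt_of_jt' hH'⟩


section Mobius
variable {K : ℕ}

noncomputable def Mh (h : Finset (Fin K) → ℝ) (S : Finset (Fin K)) : ℝ :=
  ∑ T ∈ S.powerset, (-1:ℝ)^(S.card - T.card) * h T

lemma neg_one_sum_real (R : Finset (Fin K)) :
    (∑ T ∈ R.powerset, (-1:ℝ)^T.card) = if R = ∅ then 1 else 0 := by
  have := Finset.sum_powerset_neg_one_pow_card (x := R)
  have hcast : ((∑ T ∈ R.powerset, (-1:ℤ)^T.card : ℤ) : ℝ)
      = ∑ T ∈ R.powerset, (-1:ℝ)^T.card := by push_cast; ring_nf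
  rw [← hcast, this]
  split <;> norm_num

lemma mobius_inv (h : Finset (Fin K) → ℝ) (S : Finset (Fin K)) :
    ∑ T ∈ S.powerset, Mh h T = h S := by
  unfold Mh
  rw [Finset.sum_comm' (t' := S.powerset)
    (s' := fun U => S.powerset.filter (fun T => U ⊆ T))
    (by
      intro T U
      simp only [Finset.mem_powerset, Finset.mem_filter]
      constructor
      · rintro ⟨h1, h2⟩; exact ⟨⟨h1, h2⟩, h2.trans h1⟩
      · rintro ⟨⟨h1, h2⟩, h3⟩; exact ⟨h1, h2⟩)]
  have key : ∀ U ∈ S.powerset,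
      (∑ T ∈ S.powerset.filter (fun T => U ⊆ T), (-1:ℝ)^(T.card - U.card) * h U)
      = (if U = S then 1 else 0) * h U := by
    intro U hU
    rw [Finset.mem_powerset] at hU
    rw [← Finset.sum_mul]
    congr 1
    have hre : (∑ T ∈ S.powerset.filter (fun T => U ⊆ T), (-1:ℝ)^(T.card - U.card))
        = ∑ R ∈ (S \ U).powerset, (-1:ℝ)^R.card := by
      refine Finset.sum_nbij' (fun T => T \ U) (fun R => U ∪ R) ?_ ?_ ?_ ?_ ?_
      · intro T hT
        rw [Finset.mem_filter, Finset.mem_powerset] at hT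
        rw [Finset.mem_powerset]
        exact Finset.sdiff_subset_sdiff hT.1 le_rfl
      · intro R hR
        rw [Finset.mem_powerset] at hR
        rw [Finset.mem_filter, Finset.mem_powerset]
        constructor
        · exact Finset.union_subset hU (hR.trans (Finset.sdiff_subset))
        · exact Finset.subset_union_left
      · intro T hT
        rw [Finset.mem_filter] at hT
        exact Finset.union_sdiff_of_subset hT.2
      · intro R hR
        rw [Finset.mem_powerset] at hR
        have hdisj : Disjoint U R :=
          (Finset.disjoint_of_subset_left hR Finset.sdiff_disjoint).symm
        exact Finset.union_sdiff_cancel_left hdisj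
      · intro T hT
        rw [Finset.mem_filter] at hT
        congr 1
        exact (Finset.card_sdiff_of_subset hT.2).symm
    rw [hre, neg_one_sum_real]
    have : (S \ U = ∅) ↔ (U = S) := by
      rw [Finset.sdiff_eq_empty_iff_subset]
      exact ⟨fun h' => Finset.Subset.antisymm hU h', fun h' => h' ▸ le_rfl⟩
    simp only [this]
  rw [Finset.sum_congr rfl key]
  simp only [ite_mul, one_mul, zero_mul]
  rw [Finset.sum_ite_eq' S.powerset S h]
  simp
end Mobius

section Counting
variable {K : ℕ}

noncomputable def sepF {ℱ : Finset (Finset (Fin K))} (e : Sym2 {C // C ∈ ℱ}) :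
    Finset (Fin K) :=
  Sym2.lift ⟨fun A B => A.1 ∩ B.1, fun A B => Finset.inter_comm _ _⟩ e

variable {ℱ : Finset (Finset (Fin K))} {G : SimpleGraph {C // C ∈ ℱ}}

lemma count_key (hJT : IsJunctionTree ℱ G) {S : Finset (Fin K)} (hS : S.Nonempty) :
    (Finset.univ.filter (fun C : {C // C ∈ ℱ} => S ⊆ C.1)).card
      = (G.edgeFinset.filter (fun e => S ⊆ sepF e)).card
        + (if ∃ C ∈ ℱ, S ⊆ C then 1 else 0) := by
  obtain ⟨hac, hedge, hreach, hrip⟩ := hJT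
  by_cases hcov : ∃ C ∈ ℱ, S ⊆ C
  · rw [if_pos hcov]
    obtain ⟨C₀, hC₀, hSC₀⟩ := hcov
    set P : {C // C ∈ ℱ} → Prop := fun C => S ⊆ C.1 with hP
    set GS := G.comap (Subtype.val : Subtype P → {C // C ∈ ℱ}) with hGS
    have hne : Nonempty (Subtype P) := ⟨⟨⟨C₀, hC₀⟩, hSC₀⟩⟩
    obtain ⟨a, ha⟩ := hS
    -- connectivity
    have hconn : GS.Connected := by
      rw [SimpleGraph.connected_iff]
      refine ⟨?_, hne⟩
      intro x y
      obtain ⟨c⟩ := hreach x.1 y.1 a (x.2 ha) (y.2 ha)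
      have hsup : ∀ z ∈ c.bypass.support, P z := by
        intro z hz b hb
        exact hrip x.1 y.1 b (x.2 hb) (y.2 hb) c.bypass c.bypass_isPath z hz
      obtain ⟨w, -⟩ := pullback_walk c.bypass hsup x y rfl rfl
      exact w.reachable
    have hacS : GS.IsAcyclic := by
      intro u c hc
      exact hac _ (hc.map (f := comapIncl G P) Subtype.val_injective)
    have htree : GS.IsTree := ⟨hconn, hacS⟩
    have hcard := htree.card_edgeFinset
    have hcardsub : Fintype.card (Subtype P)
        = (Finset.univ.filter (fun C : {C // C ∈ ℱ} => S ⊆ C.1)).card := by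
      rw [Fintype.card_subtype]
    have hbij : GS.edgeFinset.card = (G.edgeFinset.filter (fun e => S ⊆ sepF e)).card := by
      refine Finset.card_bij (fun e _ => Sym2.map Subtype.val e) ?_ ?_ ?_
      · intro e he
        induction e with
        | _ x y =>
          rw [SimpleGraph.mem_edgeFinset, SimpleGraph.mem_edgeSet] at he
          rw [Finset.mem_filter, Sym2.map_pair_eq, SimpleGraph.mem_edgeFinset,
            SimpleGraph.mem_edgeSet]
          refine ⟨he, ?_⟩
          show S ⊆ x.1.1 ∩ y.1.1
          exact Finset.subset_inter x.2 y.2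
      · intro e₁ h₁ e₂ h₂ heq
        exact Sym2.map.injective Subtype.val_injective heq
      · intro e he
        rw [Finset.mem_filter, SimpleGraph.mem_edgeFinset] at he
        obtain ⟨hee, hsep⟩ := he
        induction e with
        | _ A B =>
          rw [SimpleGraph.mem_edgeSet] at hee
          have hsep' : S ⊆ A.1 ∩ B.1 := hsep
          have hPA : P A := hsep'.trans Finset.inter_subset_left
          have hPB : P B := hsep'.trans Finset.inter_subset_right
          refine ⟨s(⟨A, hPA⟩, ⟨B, hPB⟩), ?_, ?_⟩
          · rw [SimpleGraph.mem_edgeFinset, SimpleGraph.mem_edgeSet]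
            exact hee
          · rw [Sym2.map_pair_eq]
    omega
  · rw [if_neg hcov]
    have h1 : (Finset.univ.filter (fun C : {C // C ∈ ℱ} => S ⊆ C.1)) = ∅ := by
      rw [Finset.filter_eq_empty_iff]
      intro C _ hSC
      exact hcov ⟨C.1, C.2, hSC⟩
    have h2 : (G.edgeFinset.filter (fun e => S ⊆ sepF e)) = ∅ := by
      rw [Finset.filter_eq_empty_iff]
      intro e he
      induction e with
      | _ A B =>
        intro hsep
        have hsep' : S ⊆ A.1 ∩ B.1 := hsep
        exact hcov ⟨A.1, A.2, hsep'.trans Finset.inter_subset_left⟩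
    rw [h1, h2]
    simp
end Counting

section TreeSum
variable {K : ℕ} {ℱ : Finset (Finset (Fin K))} {G : SimpleGraph {C // C ∈ ℱ}}

lemma powerset_eq_filter (C : Finset (Fin K)) :
    C.powerset = Finset.univ.filter (fun T => T ⊆ C) := by
  ext T; simp

lemma tree_sum (hJT : IsJunctionTree ℱ G) (h : Finset (Fin K) → ℝ) (h0 : h ∅ = 0) :
    (∑ C : {C // C ∈ ℱ}, h C.1) - (∑ e ∈ G.edgeFinset, h (sepF e))
      = ∑ S ∈ Finset.univ.filter
          (fun S : Finset (Fin K) => S.Nonempty ∧ ∃ C ∈ ℱ, S ⊆ C), Mh h S := by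
  have hA : (∑ C : {C // C ∈ ℱ}, h C.1)
      = ∑ S : Finset (Fin K), (Mh h S) *
          ((Finset.univ.filter (fun C : {C // C ∈ ℱ} => S ⊆ C.1)).card : ℝ) := by
    calc ∑ C : {C // C ∈ ℱ}, h C.1
        = ∑ C : {C // C ∈ ℱ}, ∑ S ∈ C.1.powerset, Mh h S :=
          Finset.sum_congr rfl fun C _ => (mobius_inv h C.1).symm
      _ = ∑ C : {C // C ∈ ℱ}, ∑ S : Finset (Fin K), if S ⊆ C.1 then Mh h S else 0 := by
          refine Finset.sum_congr rfl fun C _ => ?_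
          rw [powerset_eq_filter, Finset.sum_filter]
      _ = ∑ S : Finset (Fin K), ∑ C : {C // C ∈ ℱ}, if S ⊆ C.1 then Mh h S else 0 :=
          Finset.sum_comm
      _ = _ := by
          refine Finset.sum_congr rfl fun S _ => ?_
          simp_rw [← mul_boole _ (Mh h S)]
          rw [← Finset.mul_sum, Finset.sum_boole]
  have hB : (∑ e ∈ G.edgeFinset, h (sepF e))
      = ∑ S : Finset (Fin K), (Mh h S) *
          ((G.edgeFinset.filter (fun e => S ⊆ sepF e)).card : ℝ) := by
    calc ∑ e ∈ G.edgeFinset, h (sepF e)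
        = ∑ e ∈ G.edgeFinset, ∑ S ∈ (sepF e).powerset, Mh h S :=
          Finset.sum_congr rfl fun e _ => (mobius_inv h (sepF e)).symm
      _ = ∑ e ∈ G.edgeFinset, ∑ S : Finset (Fin K), if S ⊆ sepF e then Mh h S else 0 := by
          refine Finset.sum_congr rfl fun e _ => ?_
          rw [powerset_eq_filter, Finset.sum_filter]
      _ = ∑ S : Finset (Fin K), ∑ e ∈ G.edgeFinset, if S ⊆ sepF e then Mh h S else 0 :=
          Finset.sum_comm
      _ = _ := by
          refine Finset.sum_congr rfl fun S _ => ?_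
          simp_rw [← mul_boole _ (Mh h S)]
          rw [← Finset.mul_sum, Finset.sum_boole]
  rw [hA, hB, ← Finset.sum_sub_distrib, Finset.sum_filter]
  refine Finset.sum_congr rfl fun S _ => ?_
  by_cases hSe : S.Nonempty
  · have hck := count_key hJT (S := S) hSe
    by_cases hcov : ∃ C ∈ ℱ, S ⊆ C
    · rw [if_pos ⟨hSe, hcov⟩]
      rw [if_pos hcov] at hck
      rw [hck]
      push_cast
      ring
    · rw [if_neg (fun hh => hcov hh.2)]
      rw [if_neg hcov, add_zero] at hck
      rw [hck]
      ring
  · rw [if_neg (fun hh => hSe hh.1)]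
    have hSempty : S = ∅ := Finset.not_nonempty_iff_eq_empty.1 hSe
    subst hSempty
    have hM : Mh h ∅ = 0 := by
      unfold Mh
      simp [h0]
    rw [hM]
    ring
end TreeSum


section Glue
variable {K : ℕ}

lemma margAt_pos {q : (Fin K → Bool) → ℝ} (hpos : ∀ w, 0 < q w)
    (X : Finset (Fin K)) (v : Fin K → Bool) : 0 < margAt q X v := by
  unfold margAt
  refine Finset.sum_pos' (fun w _ => ?_) ⟨v, Finset.mem_univ v, ?_⟩
  · split
    · exact (hpos w).le
    · exact le_refl _
  · rw [if_pos (fun i _ => rfl)]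
    exact hpos v

lemma margAt_empty {q : (Fin K → Bool) → ℝ} (hq : IsDistribution q) (v : Fin K → Bool) :
    margAt q ∅ v = 1 := by
  unfold margAt
  simp only [Finset.notMem_empty, false_implies, implies_true, if_true]
  exact hq.2

lemma jtDist_product (q : (Fin K → Bool) → ℝ) (ℱ : Finset (Finset (Fin K)))
    (G : SimpleGraph {C // C ∈ ℱ}) (v : Fin K → Bool) :
    jtDist q ℱ G v = (∏ C : {C // C ∈ ℱ}, margAt q C.1 v) /
      (∏ e ∈ G.edgeFinset, margAt q (sepF e) v) := by
  unfold jtDist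
  congr 1
  refine Finset.prod_congr rfl fun e _ => ?_
  induction e with
  | _ A B => rfl

lemma jtDist_pos {q : (Fin K → Bool) → ℝ} (hpos : ∀ w, 0 < q w)
    (ℱ : Finset (Finset (Fin K))) (G : SimpleGraph {C // C ∈ ℱ}) (v : Fin K → Bool) :
    0 < jtDist q ℱ G v := by
  rw [jtDist_product]
  exact div_pos (Finset.prod_pos fun C _ => margAt_pos hpos _ _)
    (Finset.prod_pos fun e _ => margAt_pos hpos _ _)

lemma log_jtDist {q : (Fin K → Bool) → ℝ} (hq : IsDistribution q) (hpos : ∀ w, 0 < q w)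
    {ℱ : Finset (Finset (Fin K))} {G : SimpleGraph {C // C ∈ ℱ}}
    (hJT : IsJunctionTree ℱ G) (v : Fin K → Bool) :
    Real.log (jtDist q ℱ G v)
      = ∑ S ∈ Finset.univ.filter
          (fun S : Finset (Fin K) => S.Nonempty ∧ ∃ C ∈ ℱ, S ⊆ C),
          Mh (fun T => Real.log (margAt q T v)) S := by
  rw [jtDist_product, Real.log_div (Finset.prod_pos fun C _ => margAt_pos hpos _ _).ne'
    (Finset.prod_pos fun e _ => margAt_pos hpos _ _).ne',
    Real.log_prod (fun C _ => (margAt_pos hpos _ _).ne'),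
    Real.log_prod (fun e _ => (margAt_pos hpos _ _).ne')]
  exact tree_sum hJT (fun T => Real.log (margAt q T v))
    (by show Real.log (margAt q ∅ v) = 0
        rw [margAt_empty hq]; exact Real.log_one)

end Glue

/-- A downward closed family is decomposable iff its maximal sets are, and the
junction-tree distributions over the maximal sets and over the whole family coincide. -/
theorem decomposable_iff_maxSets {K : ℕ} (q : (Fin K → Bool) → ℝ)
    (hq : IsDistribution q) (hpos : ∀ v, 0 < q v)
    (𝒢 : Finset (Finset (Fin K))) (hdc : DownwardClosed 𝒢) :
    (Decomposable 𝒢 ↔ Decomposable (maxSets 𝒢)) ∧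
    ∀ (G₁ : SimpleGraph {C // C ∈ 𝒢}) (G₂ : SimpleGraph {C // C ∈ maxSets 𝒢}),
      IsJunctionTree 𝒢 G₁ → IsJunctionTree (maxSets 𝒢) G₂ →
      ∀ v, jtDist q 𝒢 G₁ v = jtDist q (maxSets 𝒢) G₂ v := by
  constructor
  · constructor
    · exact fun h => decomp_maxSets h
    · exact fun h => decomp_of_maxSets hdc h
  · intro G₁ G₂ h₁ h₂ v
    have hfilters : Finset.univ.filter
          (fun S : Finset (Fin K) => S.Nonempty ∧ ∃ C ∈ 𝒢, S ⊆ C)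
        = Finset.univ.filter
          (fun S : Finset (Fin K) => S.Nonempty ∧ ∃ C ∈ maxSets 𝒢, S ⊆ C) := by
      refine Finset.filter_congr fun S _ => ?_
      constructor
      · rintro ⟨h1, C, hC, hSC⟩
        obtain ⟨M, hM, hCM⟩ := exists_maximal_superset hC
        exact ⟨h1, M, hM, hSC.trans hCM⟩
      · rintro ⟨h1, M, hM, hSM⟩
        exact ⟨h1, M, maxSets_subset hM, hSM⟩
    have hlog : Real.log (jtDist q 𝒢 G₁ v) = Real.log (jtDist q (maxSets 𝒢) G₂ v) := by
      rw [log_jtDist hq hpos h₁ v, log_jtDist hq hpos h₂ v, hfilters]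
    calc jtDist q 𝒢 G₁ v = Real.exp (Real.log (jtDist q 𝒢 G₁ v)) :=
          (Real.exp_log (jtDist_pos hpos _ _ _)).symm
      _ = Real.exp (Real.log (jtDist q (maxSets 𝒢) G₂ v)) := by rw [hlog]
      _ = jtDist q (maxSets 𝒢) G₂ v := Real.exp_log (jtDist_pos hpos _ _ _)
end JTPrime
end

section
/- Let T be a junction tree and let X and Y be cliques of T with a ∈ X ∩ Y. Suppose the path P in T from X to Y contains an edge (Z, W) whose separator Z ∩ W has size |X ∩ Y|. Then Z ∩ W = X ∩ Y, and the tree obtained from T by deleting edge (Z, W) and adding edge (X, Y) is again a junction tree. -/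
open scoped Classical

section EdgeSwapAux

private lemma dart_split {V : Type*} {G : SimpleGraph V} :
    ∀ {u v : V} (w : G.Walk u v) (d : G.Dart), d ∈ w.darts →
      ∃ (p : G.Walk u d.fst) (q : G.Walk d.snd v),
        w = p.append (SimpleGraph.Walk.cons d.adj q)
  | _, _, .nil, d, hd => by simp at hd
  | u, v, .cons h w', d, hd => by
    rw [SimpleGraph.Walk.darts_cons, List.mem_cons] at hd
    rcases hd with rfl | hd
    · exact ⟨.nil, w', rfl⟩
    · obtain ⟨p, q, hpq⟩ := dart_split w' d hd
      exact ⟨.cons h p, q, by rw [SimpleGraph.Walk.cons_append, hpq]⟩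

end EdgeSwapAux

/-- If an edge `(Z, W)` on the path from `X` to `Y` has a separator of the same
size as `X ∩ Y`, then `Z ∩ W = X ∩ Y` and swapping the edge `(Z, W)` for the edge `(X, Y)`
again yields a junction tree. -/
theorem edge_swap {K : ℕ} (𝒢 : Finset (Finset (Fin K)))
    (G : SimpleGraph {C // C ∈ 𝒢}) (hG : IsJunctionTree 𝒢 G)
    (X Y : {C // C ∈ 𝒢}) (hne : X ≠ Y) (a : Fin K) (ha : a ∈ X.1 ∩ Y.1)
    (w : G.Walk X Y) (hw : w.IsPath) (d : G.Dart) (hd : d ∈ w.darts)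
    (hcard : ((d.toProd.1).1 ∩ (d.toProd.2).1).card = (X.1 ∩ Y.1).card) :
    (d.toProd.1).1 ∩ (d.toProd.2).1 = X.1 ∩ Y.1 ∧
    IsJunctionTree 𝒢
      (SimpleGraph.fromEdgeSet
        (insert s(X, Y) (G.edgeSet \ {s(d.toProd.1, d.toProd.2)}))) := by
  classical
  obtain ⟨hac, hadjG, hreach, hrip⟩ := hG
  obtain ⟨haX, haY⟩ := Finset.mem_inter.mp ha
  set e : Sym2 {C // C ∈ 𝒢} := s(d.toProd.1, d.toProd.2) with he
  set G' := SimpleGraph.fromEdgeSet (insert s(X, Y) (G.edgeSet \ {e})) with hG'def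
  -- Part 1: the separator equals X ∩ Y
  have hZs : d.toProd.1 ∈ w.support := SimpleGraph.Walk.dart_fst_mem_support_of_mem_darts _ hd
  have hWs : d.toProd.2 ∈ w.support := SimpleGraph.Walk.dart_snd_mem_support_of_mem_darts _ hd
  have hsub : X.1 ∩ Y.1 ⊆ (d.toProd.1).1 ∩ (d.toProd.2).1 := by
    intro b hb
    obtain ⟨hbX, hbY⟩ := Finset.mem_inter.mp hb
    exact Finset.mem_inter.mpr
      ⟨hrip X Y b hbX hbY w hw _ hZs, hrip X Y b hbX hbY w hw _ hWs⟩
  have heq : (d.toProd.1).1 ∩ (d.toProd.2).1 = X.1 ∩ Y.1 :=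
    (Finset.eq_of_subset_of_card_le hsub hcard.le).symm
  -- Splitting `w` at the dart `d`
  obtain ⟨p, q, hwsplit⟩ := dart_split w d hd
  have hwe : w.edges = p.edges ++ e :: q.edges := by
    rw [hwsplit, SimpleGraph.Walk.edges_append, SimpleGraph.Walk.edges_cons]
  have hnodup : w.edges.Nodup := hw.isTrail.edges_nodup
  rw [hwe] at hnodup
  obtain ⟨hnd1, hnd2, hnd3⟩ := List.nodup_append'.mp hnodup
  have hep : e ∉ p.edges := fun hh => hnd3 hh List.mem_cons_self
  have heqq : e ∉ q.edges := (List.nodup_cons.mp hnd2).1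
  have hpsup : ∀ n ∈ p.support, n ∈ w.support := by
    intro n hn
    rw [hwsplit, SimpleGraph.Walk.mem_support_append_iff]
    exact Or.inl hn
  have hqsup : ∀ n ∈ q.support, n ∈ w.support := by
    intro n hn
    rw [hwsplit, SimpleGraph.Walk.mem_support_append_iff]
    exact Or.inr (by rw [SimpleGraph.Walk.support_cons]; exact List.mem_cons_of_mem _ hn)
  -- membership in the edge set of G'
  have hmemG' : ∀ f, f ∈ G.edgeSet → f ≠ e → f ∈ G'.edgeSet := by
    intro f hf hfe
    rw [hG'def, SimpleGraph.edgeSet_fromEdgeSet]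
    exact ⟨Set.mem_insert_of_mem _ ⟨hf, hfe⟩, G.not_isDiag_of_mem_edgeSet hf⟩
  have hXY' : G'.Adj X Y := by
    rw [hG'def, SimpleGraph.fromEdgeSet_adj]
    exact ⟨Set.mem_insert _ _, hne⟩
  -- the graph with the edge e deleted
  set Gdel := G \ SimpleGraph.fromEdgeSet {e} with hGdeldef
  have hGdelE : Gdel.edgeSet = G.edgeSet \ {e} := by
    rw [hGdeldef, SimpleGraph.edgeSet_sdiff, SimpleGraph.edgeSet_fromEdgeSet,
      SimpleGraph.edgeSet_sdiff_sdiff_isDiag]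
  have hbr : G.IsBridge s(d.toProd.1, d.toProd.2) :=
    (SimpleGraph.isAcyclic_iff_forall_edge_isBridge.mp hac) ((G.mem_edgeSet).mpr d.adj)
  have hbridge : ¬ Gdel.Reachable d.toProd.1 d.toProd.2 := by
    have hx := (SimpleGraph.isBridge_iff.mp hbr)
    rwa [hGdeldef, he]
  have hptransdel : ∀ f ∈ p.edges, f ∈ Gdel.edgeSet := by
    intro f hf
    rw [hGdelE]
    exact ⟨p.edges_subset_edgeSet hf, fun hh => hep (hh ▸ hf)⟩
  have hqtransdel : ∀ f ∈ q.edges, f ∈ Gdel.edgeSet := by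
    intro f hf
    rw [hGdelE]
    exact ⟨q.edges_subset_edgeSet hf, fun hh => heqq (hh ▸ hf)⟩
  have hXZdel : Gdel.Reachable X d.toProd.1 := ⟨p.transfer Gdel hptransdel⟩
  have hWYdel : Gdel.Reachable d.toProd.2 Y := ⟨q.transfer Gdel hqtransdel⟩
  have hnXY : ¬ Gdel.Reachable X Y := fun h =>
    hbridge ((hXZdel.symm.trans h).trans hWYdel.symm)
  -- acyclicity of G'
  have hac' : G'.IsAcyclic := by
    intro v c hc
    by_cases hmu : s(X, Y) ∈ c.edges
    · have hr : (G' \ SimpleGraph.fromEdgeSet {s(X, Y)}).Reachable X Y :=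
        ((SimpleGraph.adj_and_reachable_delete_edges_iff_exists_cycle (G := G')).mpr
          ⟨v, c, hc, hmu⟩).2
      apply hnXY
      refine hr.mono ?_
      intro u₁ u₂ hu
      rw [SimpleGraph.sdiff_adj] at hu
      obtain ⟨hu1, hu2⟩ := hu
      have hu1' : s(u₁, u₂) ∈ insert s(X, Y) (G.edgeSet \ {e}) ∧ u₁ ≠ u₂ := by
        rwa [hG'def, SimpleGraph.fromEdgeSet_adj] at hu1
      have hne12 : u₁ ≠ u₂ := hu1'.2
      have hXYne : s(u₁, u₂) ≠ s(X, Y) := fun hh =>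
        hu2 ((SimpleGraph.fromEdgeSet_adj _).mpr ⟨Set.mem_singleton_iff.mpr hh, hne12⟩)
      have hmem : s(u₁, u₂) ∈ G.edgeSet \ {e} := by
        rcases Set.mem_insert_iff.mp hu1'.1 with hh | hh
        · exact absurd hh hXYne
        · exact hh
      rw [hGdeldef, SimpleGraph.sdiff_adj]
      exact ⟨(SimpleGraph.mem_edgeSet G).mp hmem.1,
        fun hh => hmem.2 ((SimpleGraph.fromEdgeSet_adj _).mp hh).1⟩
    · have hce : ∀ f ∈ c.edges, f ∈ G.edgeSet := by
        intro f hf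
        have hf' := c.edges_subset_edgeSet hf
        rw [hG'def, SimpleGraph.edgeSet_fromEdgeSet] at hf'
        rcases Set.mem_insert_iff.mp hf'.1 with hh | hh
        · exact absurd (hh ▸ hf) hmu
        · exact hh.1
      exact hac (c.transfer G hce) (hc.transfer hce)
  -- key construction: walks in G' along which an attribute persists
  have key : ∀ (U V : {C // C ∈ 𝒢}) (b : Fin K), b ∈ U.1 → b ∈ V.1 →
      ∃ r : G'.Walk U V, ∀ n ∈ r.support, b ∈ n.1 := by
    intro U V b hU hV
    obtain ⟨w0⟩ := hreach U V b hU hV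
    set p0 := w0.bypass with hp0def
    have hp0path : p0.IsPath := w0.bypass_isPath
    have hp0 : ∀ n ∈ p0.support, b ∈ n.1 := fun n hn => hrip U V b hU hV p0 hp0path n hn
    by_cases hcase : e ∈ p0.edges
    · -- b belongs to both endpoints of e, hence to X and Y
      have hbZ : b ∈ (d.toProd.1).1 := hp0 _ (p0.fst_mem_support_of_mem_edges (he ▸ hcase))
      have hbW : b ∈ (d.toProd.2).1 := hp0 _ (p0.snd_mem_support_of_mem_edges (he ▸ hcase))
      have hbXY : b ∈ X.1 ∩ Y.1 := heq ▸ Finset.mem_inter.mpr ⟨hbZ, hbW⟩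
      obtain ⟨hbX, hbY⟩ := Finset.mem_inter.mp hbXY
      have hwsup : ∀ n ∈ w.support, b ∈ n.1 := fun n hn => hrip X Y b hbX hbY w hw n hn
      -- connector walk from d.fst to d.snd in G'
      have hptrans : ∀ f ∈ p.edges, f ∈ G'.edgeSet := fun f hf =>
        hmemG' f (p.edges_subset_edgeSet hf) (fun hh => hep (hh ▸ hf))
      have hqtrans : ∀ f ∈ q.edges, f ∈ G'.edgeSet := fun f hf =>
        hmemG' f (q.edges_subset_edgeSet hf) (fun hh => heqq (hh ▸ hf))
      set cw : G'.Walk d.toProd.1 d.toProd.2 :=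
        (p.transfer G' hptrans).reverse.append
          (SimpleGraph.Walk.cons hXY' (q.transfer G' hqtrans).reverse) with hcwdef
      have hcwsup : ∀ n ∈ cw.support, b ∈ n.1 := by
        intro n hn
        rw [hcwdef, SimpleGraph.Walk.mem_support_append_iff] at hn
        rcases hn with hn | hn
        · rw [SimpleGraph.Walk.support_reverse, List.mem_reverse,
            SimpleGraph.Walk.support_transfer] at hn
          exact hwsup n (hpsup n hn)
        · rw [SimpleGraph.Walk.support_cons, List.mem_cons] at hn
          rcases hn with rfl | hn
          · exact hbX
          · rw [SimpleGraph.Walk.support_reverse, List.mem_reverse,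
              SimpleGraph.Walk.support_transfer] at hn
            exact hwsup n (hqsup n hn)
      -- split p0 at the dart carrying e
      have hdart : e ∈ p0.darts.map SimpleGraph.Dart.edge := hcase
      obtain ⟨d0, hd0, hd0e⟩ := List.mem_map.mp hdart
      obtain ⟨pa, pb, hp0split⟩ := dart_split p0 d0 hd0
      have hp0e : p0.edges = pa.edges ++ d0.edge :: pb.edges := by
        rw [hp0split, SimpleGraph.Walk.edges_append, SimpleGraph.Walk.edges_cons]
        rfl
      have hnodup0 : p0.edges.Nodup := hp0path.isTrail.edges_nodup
      rw [hp0e] at hnodup0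
      obtain ⟨hn1, hn2, hn3⟩ := List.nodup_append'.mp hnodup0
      have hepa : e ∉ pa.edges := fun hh =>
        hn3 hh (by rw [hd0e]; exact List.mem_cons_self)
      have hepb : e ∉ pb.edges := by
        have hx := (List.nodup_cons.mp hn2).1
        rw [hd0e] at hx
        exact hx
      have hpatrans : ∀ f ∈ pa.edges, f ∈ G'.edgeSet := fun f hf =>
        hmemG' f (pa.edges_subset_edgeSet hf) (fun hh => hepa (hh ▸ hf))
      have hpbtrans : ∀ f ∈ pb.edges, f ∈ G'.edgeSet := fun f hf =>
        hmemG' f (pb.edges_subset_edgeSet hf) (fun hh => hepb (hh ▸ hf))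
      have hpasup : ∀ n ∈ pa.support, b ∈ n.1 := by
        intro n hn
        apply hp0
        rw [hp0split, SimpleGraph.Walk.mem_support_append_iff]
        exact Or.inl hn
      have hpbsup : ∀ n ∈ pb.support, b ∈ n.1 := by
        intro n hn
        apply hp0
        rw [hp0split, SimpleGraph.Walk.mem_support_append_iff]
        exact Or.inr (by rw [SimpleGraph.Walk.support_cons]; exact List.mem_cons_of_mem _ hn)
      -- orientation of the dart d0
      have hd0e' : s(d0.fst, d0.snd) = s(d.toProd.1, d.toProd.2) := by
        rw [← he]; exact hd0e
      have hor : (d0.fst = d.toProd.1 ∧ d0.snd = d.toProd.2) ∨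
          (d0.fst = d.toProd.2 ∧ d0.snd = d.toProd.1) := Sym2.eq_iff.mp hd0e'
      rcases hor with ⟨h1, h2⟩ | ⟨h1, h2⟩
      · refine ⟨(pa.transfer G' hpatrans).append
          ((cw.copy h1.symm h2.symm).append (pb.transfer G' hpbtrans)), ?_⟩
        intro n hn
        rw [SimpleGraph.Walk.mem_support_append_iff,
          SimpleGraph.Walk.mem_support_append_iff] at hn
        rcases hn with hn | hn | hn
        · rw [SimpleGraph.Walk.support_transfer] at hn; exact hpasup n hn
        · rw [SimpleGraph.Walk.support_copy] at hn; exact hcwsup n hn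
        · rw [SimpleGraph.Walk.support_transfer] at hn; exact hpbsup n hn
      · refine ⟨(pa.transfer G' hpatrans).append
          ((cw.reverse.copy h1.symm h2.symm).append (pb.transfer G' hpbtrans)), ?_⟩
        intro n hn
        rw [SimpleGraph.Walk.mem_support_append_iff,
          SimpleGraph.Walk.mem_support_append_iff] at hn
        rcases hn with hn | hn | hn
        · rw [SimpleGraph.Walk.support_transfer] at hn; exact hpasup n hn
        · rw [SimpleGraph.Walk.support_copy, SimpleGraph.Walk.support_reverse,
            List.mem_reverse] at hn
          exact hcwsup n hn
        · rw [SimpleGraph.Walk.support_transfer] at hn; exact hpbsup n hn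
    · refine ⟨p0.transfer G' (fun f hf =>
        hmemG' f (p0.edges_subset_edgeSet hf) (fun hh => hcase (hh ▸ hf))), ?_⟩
      intro n hn
      rw [SimpleGraph.Walk.support_transfer] at hn
      exact hp0 n hn
  refine ⟨heq, hac', ?_, ?_, ?_⟩
  · -- adjacent cliques intersect
    intro U V h
    rw [hG'def, SimpleGraph.fromEdgeSet_adj] at h
    rcases Set.mem_insert_iff.mp h.1 with h1 | h1
    · rcases Sym2.eq_iff.mp h1 with ⟨rfl, rfl⟩ | ⟨rfl, rfl⟩
      · exact ⟨a, ha⟩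
      · exact ⟨a, Finset.mem_inter.mpr ⟨haY, haX⟩⟩
    · exact hadjG U V ((SimpleGraph.mem_edgeSet G).mp h1.1)
  · -- reachability
    intro U V b hU hV
    obtain ⟨r, _⟩ := key U V b hU hV
    exact ⟨r⟩
  · -- running intersection property
    intro U V b hU hV pth hpth n hn
    obtain ⟨r, hr⟩ := key U V b hU hV
    have hun : (⟨pth, hpth⟩ : G'.Path U V) = r.toPath := hac'.path_unique _ _
    have hpb : pth = r.bypass := congrArg Subtype.val hun
    exact hr n (r.support_bypass_subset (hpb ▸ hn))
end
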